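/- arXiv:0901.0443 — 4 statements merged into one kernel-verified Lean document; each statement's English description precedes it below -/
import Mathlib

section
/- For every multisegment ψ and every i ∈ ℤ/eℤ, one has f̃_i ψ = (f̂_{−i}(ψ^ρ))^ρ; that is, the operators f̃_i and ρ ∘ f̂_{−i} ∘ ρ coincide on multisegments. -/
namespace AffineA

/-- A multisegment: a multiset of segments, each recorded as a pair
(head, length) with head in `ZMod e` and (positive) length in `ℕ`. -/
abbrev Multisegment (e : ℕ) := Multiset (ZMod e × ℕ)

variable {e : ℕ}

/-- Every segment occurring in the multisegment has positive length
(part of the definition of a multisegment). -/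
def Proper (ψ : Multisegment e) : Prop := ∀ p ∈ ψ, 0 < p.2

/-- A multisegment is aperiodic if for every length `l > 0` some residue `i`
carries no segment `[i;l)`. -/
def Aperiodic (ψ : Multisegment e) : Prop :=
  ∀ l : ℕ, 0 < l → ∃ i : ZMod e, ψ.count (i, l) = 0

/-- The segment with tail `t` and length `l`, written in (head, length) form:
`(l;t] = [t-l+1;l)`. -/
def seg (t : ZMod e) (l : ℕ) : ZMod e × ℕ := (t - (l : ZMod e) + 1, l)

/-- A letter of the words used in the cancellation process: `false` = R,
`true` = A, labelled by its length. -/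
abbrev Letter := Bool × ℕ

/-- One step of the stack-based cancellation of factors `RA`: an incoming `A`
cancels a pending `R`. The stack holds the reduced word so far, in reversed
order (first entry = rightmost letter). -/
def step : List Letter → Letter → List Letter
  | (false, _) :: rest, (true, _) => rest
  | s, x => x :: s

/-- The reduced word obtained by deleting factors `RA` as many times as
possible, in reversed order (first entry = rightmost letter). -/
def reduce (w : List Letter) : List Letter := w.foldl step []

/-- The word `∏_{l=1}^{N} R^{fR l} A^{fA l}` (letters listed for `l = 1, 2, …`
from left to right, each letter labelled by its length). -/
def word (N : ℕ) (fR fA : ℕ → ℕ) : List Letter :=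
  (List.range N).flatMap fun k =>
    List.replicate (fR (k + 1)) ((false : Bool), k + 1) ++
      List.replicate (fA (k + 1)) ((true : Bool), k + 1)

/-- A bound exceeding the length of every segment of `ψ`. -/
def bound (ψ : Multisegment e) : ℕ := (ψ.map Prod.snd).sum + 1

/-- The word `w_i(ψ) = ∏_{l ≥ 1} R^{m_{(l;i]}} A^{m_{(l;i-1]}}`. -/
def wTil (ψ : Multisegment e) (i : ZMod e) : List Letter :=
  word (bound ψ) (fun l => ψ.count (seg i l)) (fun l => ψ.count (seg (i - 1) l))

/-- The word `ŵ_i(ψ) = ∏_{l ≥ 1} R̂^{m_{[i;l)}} Â^{m_{[i+1;l)}}`. -/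
def wHat (ψ : Multisegment e) (i : ZMod e) : List Letter :=
  word (bound ψ) (fun l => ψ.count (i, l)) (fun l => ψ.count (i + 1, l))

/-- `a_i(ψ)`: number of letters `A` in the reduced word of `w_i(ψ)`. -/
def aTil (ψ : Multisegment e) (i : ZMod e) : ℕ :=
  ((reduce (wTil ψ i)).filter fun x => x.1).length

/-- `r_i(ψ)`: number of letters `R` in the reduced word of `w_i(ψ)`. -/
def rTil (ψ : Multisegment e) (i : ZMod e) : ℕ :=
  ((reduce (wTil ψ i)).filter fun x => !x.1).length

/-- `l_{0,i}(ψ)`: length label of the rightmost letter `A` of the reduced word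
of `w_i(ψ)`, and `0` if there is no letter `A`. -/
def l0Til (ψ : Multisegment e) (i : ZMod e) : ℕ :=
  (((reduce (wTil ψ i)).filter fun x => x.1).headI).2

/-- `â_i(ψ)`: number of letters `Â` in the reduced word of `ŵ_i(ψ)`. -/
def aHat (ψ : Multisegment e) (i : ZMod e) : ℕ :=
  ((reduce (wHat ψ i)).filter fun x => x.1).length

/-- `r̂_i(ψ)`: number of letters `R̂` in the reduced word of `ŵ_i(ψ)`. -/
def rHat (ψ : Multisegment e) (i : ZMod e) : ℕ :=
  ((reduce (wHat ψ i)).filter fun x => !x.1).length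

/-- `l̂_{0,i}(ψ)`: length label of the rightmost letter `Â` of the reduced word
of `ŵ_i(ψ)`, and `0` if there is no letter `Â`. -/
def l0Hat (ψ : Multisegment e) (i : ZMod e) : ℕ :=
  (((reduce (wHat ψ i)).filter fun x => x.1).headI).2

/-- The crystal operator `f̃_i`: adds `(1;i]` if `a_i(ψ) = 0`, and otherwise
replaces a segment `(l₀-1;i-1]` by `(l₀;i]` (nothing removed if `l₀ = 1`). -/
def ftil (i : ZMod e) (ψ : Multisegment e) : Multisegment e :=
  if aTil ψ i = 0 then ψ + {seg i 1}
  else if l0Til ψ i = 1 then ψ + {seg i 1}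
  else ψ + {seg i (l0Til ψ i)} - {seg (i - 1) (l0Til ψ i - 1)}

/-- The operator `f̂_i`: adds `[i;1)` if `â_i(ψ) = 0`, and otherwise replaces a
segment `[i+1;l̂₀-1)` by `[i;l̂₀)` (nothing removed if `l̂₀ = 1`). -/
def fhat (i : ZMod e) (ψ : Multisegment e) : Multisegment e :=
  if aHat ψ i = 0 then ψ + {((i : ZMod e), 1)}
  else if l0Hat ψ i = 1 then ψ + {((i : ZMod e), 1)}
  else ψ + {((i : ZMod e), l0Hat ψ i)} - {((i + 1 : ZMod e), l0Hat ψ i - 1)}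

/-- The involution `ρ`, sending each segment `[i;l)` to `(l;-i]`. -/
def rho (ψ : Multisegment e) : Multisegment e :=
  ψ.map fun p => (-p.1 - (p.2 : ZMod e) + 1, p.2)

/-- The map underlying `ρ`. -/
def rhoFun (e : ℕ) (p : ZMod e × ℕ) : ZMod e × ℕ := (-p.1 - (p.2 : ZMod e) + 1, p.2)

lemma rhoFun_inj (e : ℕ) : Function.Injective (rhoFun e) := by
  rintro ⟨a, l⟩ ⟨b, m⟩ h
  simp only [rhoFun, Prod.mk.injEq] at h
  obtain ⟨h1, h2⟩ := h
  subst h2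
  refine Prod.ext ?_ rfl
  have : -a = -b := by linear_combination h1
  simpa using this

lemma rhoFun_surj (e : ℕ) : Function.Surjective (rhoFun e) := by
  rintro ⟨j, l⟩
  exact ⟨(-j - (l : ZMod e) + 1, l), by simp [rhoFun]; ring⟩

lemma rho_eq_map (ψ : Multisegment e) : rho ψ = ψ.map (rhoFun e) := rfl

lemma rho_count (ψ : Multisegment e) (p : ZMod e × ℕ) :
    (rho ψ).count (rhoFun e p) = ψ.count p := by
  rw [rho_eq_map]
  exact Multiset.count_map_eq_count' _ _ (rhoFun_inj e) p

lemma bound_rho (ψ : Multisegment e) : bound (rho ψ) = bound ψ := by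
  unfold bound
  rw [rho_eq_map, Multiset.map_map]
  rfl

lemma rho_rho (ψ : Multisegment e) : rho (rho ψ) = ψ := by
  rw [rho_eq_map, rho_eq_map, Multiset.map_map]
  have : rhoFun e ∘ rhoFun e = id := by
    funext ⟨a, l⟩
    simp only [Function.comp, rhoFun, id, Prod.mk.injEq]
    exact ⟨by ring, trivial⟩
  rw [this, Multiset.map_id]

lemma rho_add (a b : Multisegment e) : rho (a + b) = rho a + rho b :=
  Multiset.map_add _ _ _

lemma rho_sub (a b : Multisegment e) : rho (a - b) = rho a - rho b := by
  ext q
  obtain ⟨p, rfl⟩ := rhoFun_surj e q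
  simp only [Multiset.count_sub, rho_count]

lemma rho_singleton (p : ZMod e × ℕ) : rho ({p} : Multisegment e) = {rhoFun e p} :=
  Multiset.map_singleton _ _

lemma wHat_rho (ψ : Multisegment e) (i : ZMod e) :
    wHat (rho ψ) (-i) = wTil ψ i := by
  unfold wHat wTil
  rw [bound_rho]
  congr 1
  · funext l
    have h := rho_count ψ (seg i l)
    have : rhoFun e (seg i l) = (-i, l) := by
      simp only [rhoFun, seg, Prod.mk.injEq]
      exact ⟨by ring, trivial⟩
    rw [this] at h
    exact h
  · funext l
    have h := rho_count ψ (seg (i - 1) l)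
    have : rhoFun e (seg (i - 1) l) = (-i + 1, l) := by
      simp only [rhoFun, seg, Prod.mk.injEq]
      exact ⟨by ring, trivial⟩
    rw [this] at h
    exact h

/-- For every multisegment `ψ` and every `i ∈ ℤ/eℤ`,
`f̃_i ψ = (f̂_{-i}(ψ^ρ))^ρ`. -/
theorem ftil_eq_rho_fhat_rho (e : ℕ) (he : 2 ≤ e) (ψ : Multisegment e)
    (hψ : Proper ψ) (i : ZMod e) :
    ftil i ψ = rho (fhat (-i) (rho ψ)) := by
  have hw := wHat_rho ψ i
  have ha : aHat (rho ψ) (-i) = aTil ψ i := by rw [aHat, aTil, hw]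
  have hl : l0Hat (rho ψ) (-i) = l0Til ψ i := by rw [l0Hat, l0Til, hw]
  rw [fhat, ftil, ha, hl]
  have hs1 : rhoFun e (-i, 1) = seg i 1 := by
    simp only [rhoFun, seg, Prod.mk.injEq, Nat.cast_one]
    exact ⟨by ring, trivial⟩
  by_cases h0 : aTil ψ i = 0
  · rw [if_pos h0, if_pos h0, rho_add, rho_rho, rho_singleton, hs1]
  · rw [if_neg h0, if_neg h0]
    by_cases h1 : l0Til ψ i = 1
    · rw [if_pos h1, if_pos h1, rho_add, rho_rho, rho_singleton, hs1]
    · rw [if_neg h1, if_neg h1, rho_sub, rho_add, rho_rho, rho_singleton,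
        rho_singleton]
      have hs2 : rhoFun e (-i, l0Til ψ i) = seg i (l0Til ψ i) := by
        simp only [rhoFun, seg, Prod.mk.injEq]
        exact ⟨by ring, trivial⟩
      have hs3 : rhoFun e (-i + 1, l0Til ψ i - 1) = seg (i - 1) (l0Til ψ i - 1) := by
        simp only [rhoFun, seg, Prod.mk.injEq]
        exact ⟨by ring, trivial⟩
      rw [hs2, hs3]


end AffineA
end

section
/- For every multicharge v ∈ V_l and every FLOTW l-partition λ ∈ Φ_e(v), the multisegment f_v(λ) is aperiodic; hence f_v defines a map from Φ_e(v) to Ψ_e. -/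
namespace AffineA

variable {e : ℕ}

/-- An `l`-partition, recorded with 0-indexed rows: `p c j` is the `(j+1)`-th
part `λ^c_{j+1}` of the partition `λ^c`; parts are weakly decreasing and
eventually zero. -/
def IsLPartition {l : ℕ} (p : Fin l → ℕ → ℕ) : Prop :=
  (∀ c j, p c (j + 1) ≤ p c j) ∧ ∀ c, ∃ B, ∀ j, B ≤ j → p c j = 0

/-- A multicharge `v ∈ V_l`: weakly increasing with all differences `< e`. -/
def IsMulticharge (e : ℕ) {l : ℕ} (v : Fin l → ℤ) : Prop :=
  Monotone v ∧ ∀ c c' : Fin l, v c' - v c < e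

/-- The FLOTW conditions on an `l`-partition for the multicharge `v`
(rows are 0-indexed: the paper's `λ^c_i` is `p c (i-1)`). -/
def FLOTW (e : ℕ) {l : ℕ} (v : Fin l → ℤ) (p : Fin l → ℕ → ℕ) : Prop :=
  IsLPartition p ∧
  (∀ (c : ℕ) (h : c + 1 < l) (j : ℕ),
    p ⟨c + 1, h⟩ (j + (v ⟨c + 1, h⟩ - v ⟨c, Nat.lt_of_succ_lt h⟩).toNat) ≤
      p ⟨c, Nat.lt_of_succ_lt h⟩ j) ∧
  (∀ (hl : 0 < l) (j : ℕ),
    p ⟨0, hl⟩ (j + ((e : ℤ) + v ⟨0, hl⟩ - v ⟨l - 1, Nat.sub_lt hl Nat.one_pos⟩).toNat) ≤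
      p ⟨l - 1, Nat.sub_lt hl Nat.one_pos⟩ j) ∧
  (∀ k : ℕ, 0 < k → ∃ r : ZMod e, ∀ (c : Fin l) (j : ℕ), p c j = k →
    (((k : ℤ) - ((j : ℤ) + 1) + v c : ℤ) : ZMod e) ≠ r)

/-- The multisegment `f_v(λ)`: each nonzero part `λ^c_i` contributes the
segment with head `(1 - i + v_c) mod e` and length `λ^c_i` (here the part is
`p c j` with `i = j + 1`, so the head is `(v_c - j) mod e`). -/
noncomputable def fv (e : ℕ) {l : ℕ} (v : Fin l → ℤ) (p : Fin l → ℕ → ℕ) :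
    Multisegment e :=
  ∑ᶠ (c : Fin l) (j : ℕ),
    if 0 < p c j then ({(((v c - (j : ℤ) : ℤ) : ZMod e), p c j)} : Multisegment e) else 0

/-- For every multicharge `v ∈ V_l` and every FLOTW `l`-partition `λ`, the
multisegment `f_v(λ)` is aperiodic. -/
theorem fv_aperiodic (e : ℕ) (he : 2 ≤ e) {l : ℕ} (hl : 0 < l)
    (v : Fin l → ℤ) (hv : IsMulticharge e v)
    (p : Fin l → ℕ → ℕ) (hp : FLOTW e v p) :
    Aperiodic (fv e v p) := by
  intro k hk
  obtain ⟨r, hr⟩ := hp.2.2.2 k hk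
  refine ⟨r - (k : ZMod e) + 1, ?_⟩
  classical
  set g : Fin l → ℕ → Multisegment e := fun c j =>
    if 0 < p c j then ({(((v c - (j : ℤ) : ℤ) : ZMod e), p c j)} : Multisegment e) else 0
    with hg
  have hsupp : ∀ c : Fin l, (Function.support (g c)).Finite := by
    intro c
    obtain ⟨B, hB⟩ := hp.1.2 c
    apply Set.Finite.subset (Set.finite_Iio B)
    intro j hj
    by_contra h
    simp only [Set.mem_Iio, not_lt] at h
    apply hj
    simp [hg, hB j h]
  have key : ∀ c j, Multiset.count (r - (k : ZMod e) + 1, k) (g c j) = 0 := by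
    intro c j
    simp only [hg]
    split_ifs with h
    · rw [Multiset.count_singleton, if_neg]
      intro heq
      have h1 : p c j = k := (Prod.mk.inj heq).2.symm
      have h2 : (((v c - (j : ℤ) : ℤ) : ZMod e)) = r - (k : ZMod e) + 1 :=
        (Prod.mk.inj heq).1.symm
      apply hr c j h1
      have : (((k : ℤ) - ((j : ℤ) + 1) + v c : ℤ) : ZMod e)
          = ((v c - (j : ℤ) : ℤ) : ZMod e) + (k : ZMod e) - 1 := by
        push_cast; ring
      rw [this, h2]
      ring
    · simp
  have h2 : Multiset.count (r - (k : ZMod e) + 1, k) (fv e v p) = 0 := by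
    unfold fv
    rw [← Multiset.coe_countAddMonoidHom,
      (Multiset.countAddMonoidHom _).map_finsum (Set.toFinite _)]
    rw [finsum_eq_zero_of_forall_eq_zero]
    intro c
    rw [(Multiset.countAddMonoidHom _).map_finsum (hsupp c)]
    rw [finsum_eq_zero_of_forall_eq_zero]
    intro j
    simpa using key c j
  exact h2

end AffineA
end

section
/- For every multicharge v ∈ V_l, the map f_v : Φ_e(v) → Ψ_e is injective: if λ, μ ∈ Φ_e(v) satisfy f_v(λ) = f_v(μ), then λ = μ. -/
namespace AffineA

variable {e : ℕ}

/-! ### Auxiliary machinery for the injectivity proof.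

Rows `(c, j)` whose residue `(v c - j) mod e` equals a fixed residue form a
single chain, enumerated by `n ↦ (n % l, v (n % l) - X + (n / l) * e)` for a
suitable large `X` in the residue class; along this chain the parts of a FLOTW
`l`-partition weakly decrease, so they are the decreasingly sorted lengths of
the segments of `f_v(λ)` with the given head. -/

section InjAux

variable {l : ℕ}

/-- Component index of the `n`-th element of a chain. -/
def cIdx (hl : 0 < l) (n : ℕ) : Fin l := ⟨n % l, Nat.mod_lt n hl⟩

/-- Row index (an integer, possibly negative) of the `n`-th chain element. -/
def jIdx (hl : 0 < l) (v : Fin l → ℤ) (X : ℤ) (e n : ℕ) : ℤ :=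
  v (cIdx hl n) - X + ((n / l : ℕ) : ℤ) * (e : ℤ)

/-- The part of `p` at the `n`-th chain element, with sentinel `K` for
negative row indices. -/
def rowF (hl : 0 < l) (v : Fin l → ℤ) (X : ℤ) (e K : ℕ)
    (p : Fin l → ℕ → ℕ) (n : ℕ) : ℕ :=
  if 0 ≤ jIdx hl v X e n then p (cIdx hl n) (jIdx hl v X e n).toNat else K

lemma succ_mod_div (hl : 0 < l) (n : ℕ) :
    (n % l + 1 < l ∧ (n + 1) % l = n % l + 1 ∧ (n + 1) / l = n / l) ∨
    (n % l + 1 = l ∧ (n + 1) % l = 0 ∧ (n + 1) / l = n / l + 1) := by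
  have h1 : n % l < l := Nat.mod_lt n hl
  rcases lt_or_eq_of_le (Nat.succ_le_of_lt h1) with h | h
  · left
    have h2 : 1 < l := by omega
    have hm : (n + 1) % l = n % l + 1 := by
      rw [Nat.add_mod, Nat.mod_eq_of_lt h2, Nat.mod_eq_of_lt h]
    refine ⟨h, hm, ?_⟩
    rw [Nat.succ_div, if_neg, add_zero]
    intro hd
    have h0 : (n + 1) % l = 0 := Nat.mod_eq_zero_of_dvd hd
    omega
  · right
    have hm : (n + 1) % l = 0 := by
      rcases eq_or_lt_of_le (show 1 ≤ l from hl) with h2 | h2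
      · simp [← h2, Nat.mod_one]
      · rw [Nat.add_mod, Nat.mod_eq_of_lt h2]
        have : n % l + 1 = l := h
        rw [this, Nat.mod_self]
    have hd : l ∣ n + 1 := Nat.dvd_of_mod_eq_zero hm
    refine ⟨h, hm, ?_⟩
    rw [Nat.succ_div, if_pos hd]

lemma rowF_succ_le (hl : 0 < l) (v : Fin l → ℤ) (X : ℤ) (e K : ℕ)
    (p : Fin l → ℕ → ℕ)
    (hmono : Monotone v) (hvd : ∀ c c' : Fin l, v c' - v c < (e : ℤ))
    (hpK : ∀ c j, p c j ≤ K)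
    (hp2 : ∀ (c : ℕ) (h : c + 1 < l) (j : ℕ),
      p ⟨c + 1, h⟩ (j + (v ⟨c + 1, h⟩ - v ⟨c, Nat.lt_of_succ_lt h⟩).toNat) ≤
        p ⟨c, Nat.lt_of_succ_lt h⟩ j)
    (hp3 : ∀ j : ℕ,
      p ⟨0, hl⟩ (j + ((e : ℤ) + v ⟨0, hl⟩ - v ⟨l - 1, Nat.sub_lt hl Nat.one_pos⟩).toNat) ≤
        p ⟨l - 1, Nat.sub_lt hl Nat.one_pos⟩ j)
    (n : ℕ) : rowF hl v X e K p (n + 1) ≤ rowF hl v X e K p n := by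
  rcases succ_mod_div hl n with ⟨h1, h2, h3⟩ | ⟨h1, h2, h3⟩
  · -- same level, next component
    have hc : cIdx hl (n + 1) = ⟨n % l + 1, h1⟩ := by
      simp [cIdx, h2]
    have hc0 : cIdx hl n = ⟨n % l, Nat.lt_of_succ_lt h1⟩ := rfl
    have hd0 : 0 ≤ v ⟨n % l + 1, h1⟩ - v ⟨n % l, Nat.lt_of_succ_lt h1⟩ := by
      have : (⟨n % l, Nat.lt_of_succ_lt h1⟩ : Fin l) ≤ ⟨n % l + 1, h1⟩ := by
        simp [Fin.mk_le_mk]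
      linarith [hmono this]
    have hj : jIdx hl v X e (n + 1) =
        jIdx hl v X e n + (v ⟨n % l + 1, h1⟩ - v ⟨n % l, Nat.lt_of_succ_lt h1⟩) := by
      simp only [jIdx, hc, hc0, h3]; ring
    by_cases h0 : 0 ≤ jIdx hl v X e n
    · have h0' : 0 ≤ jIdx hl v X e (n + 1) := by rw [hj]; linarith
      rw [rowF, rowF, if_pos h0, if_pos h0', hc, hc0]
      have htn : (jIdx hl v X e (n + 1)).toNat =
          (jIdx hl v X e n).toNat +
            (v ⟨n % l + 1, h1⟩ - v ⟨n % l, Nat.lt_of_succ_lt h1⟩).toNat := by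
        rw [hj]; omega
      rw [htn]
      exact hp2 (n % l) h1 _
    · rw [rowF, rowF, if_neg h0]
      split
      · exact hpK _ _
      · exact le_refl K
  · -- wrap to the next level
    have hll : n % l = l - 1 := by omega
    have hc : cIdx hl (n + 1) = ⟨0, hl⟩ := by simp [cIdx, h2]
    have hc0 : cIdx hl n = ⟨l - 1, Nat.sub_lt hl Nat.one_pos⟩ := by
      simp [cIdx, hll]
    have hd0 : 0 < (e : ℤ) + v ⟨0, hl⟩ - v ⟨l - 1, Nat.sub_lt hl Nat.one_pos⟩ := by
      have := hvd ⟨0, hl⟩ ⟨l - 1, Nat.sub_lt hl Nat.one_pos⟩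
      linarith
    have hj : jIdx hl v X e (n + 1) =
        jIdx hl v X e n + ((e : ℤ) + v ⟨0, hl⟩ - v ⟨l - 1, Nat.sub_lt hl Nat.one_pos⟩) := by
      simp only [jIdx, hc, hc0, h3]; push_cast; ring
    by_cases h0 : 0 ≤ jIdx hl v X e n
    · have h0' : 0 ≤ jIdx hl v X e (n + 1) := by rw [hj]; linarith
      rw [rowF, rowF, if_pos h0, if_pos h0', hc, hc0]
      have htn : (jIdx hl v X e (n + 1)).toNat =
          (jIdx hl v X e n).toNat +
            ((e : ℤ) + v ⟨0, hl⟩ - v ⟨l - 1, Nat.sub_lt hl Nat.one_pos⟩).toNat := by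
        rw [hj]; omega
      rw [htn]
      exact hp3 _
    · rw [rowF, rowF, if_neg h0]
      split
      · exact hpK _ _
      · exact le_refl K

lemma row_inj (hl : 0 < l) (v : Fin l → ℤ) (X : ℤ) (e : ℕ) (he : 0 < e)
    {n n' : ℕ} (hc : cIdx hl n = cIdx hl n')
    (hj : jIdx hl v X e n = jIdx hl v X e n') : n = n' := by
  have hmod : n % l = n' % l := congrArg Fin.val hc
  have hdiv : n / l = n' / l := by
    have h1 : ((n / l : ℕ) : ℤ) * e = ((n' / l : ℕ) : ℤ) * e := by
      simp only [jIdx, hc] at hj; linarith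
    have he' : (0 : ℤ) < e := by exact_mod_cast he
    have := mul_right_cancel₀ (ne_of_gt he') h1
    exact_mod_cast this
  calc n = l * (n / l) + n % l := (Nat.div_add_mod n l).symm
    _ = l * (n' / l) + n' % l := by rw [hdiv, hmod]
    _ = n' := Nat.div_add_mod n' l

lemma row_surj (hl : 0 < l) (v : Fin l → ℤ) (X : ℤ) (e : ℕ) (he : 0 < e)
    (c : Fin l) (j : ℤ) (hj : 0 ≤ j) (hX : v c ≤ X)
    (hdvd : (e : ℤ) ∣ X - v c + j) :
    ∃ n : ℕ, cIdx hl n = c ∧ jIdx hl v X e n = j := by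
  obtain ⟨t, ht⟩ := hdvd
  have ht0 : 0 ≤ t := by
    have he' : (0 : ℤ) < e := by exact_mod_cast he
    nlinarith
  refine ⟨l * t.toNat + c.val, ?_, ?_⟩
  · apply Fin.ext
    show (l * t.toNat + c.val) % l = c.val
    rw [Nat.mul_add_mod, Nat.mod_eq_of_lt c.isLt]
  · have hdd : (l * t.toNat + c.val) / l = t.toNat := by
      rw [Nat.mul_add_div hl, Nat.div_eq_of_lt c.isLt, add_zero]
    have hcc : cIdx hl (l * t.toNat + c.val) = c := by
      apply Fin.ext
      show (l * t.toNat + c.val) % l = c.val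
      rw [Nat.mul_add_mod, Nat.mod_eq_of_lt c.isLt]
    rw [jIdx, hcc, hdd]
    have htt : ((t.toNat : ℕ) : ℤ) = t := Int.toNat_of_nonneg ht0
    rw [htt]
    linarith [ht]

lemma jIdx_large (hl : 0 < l) (v : Fin l → ℤ) (X : ℤ) (e : ℕ) (he : 0 < e)
    (D Bd : ℕ) (hD : ∀ c, X - v c ≤ (D : ℤ)) {n : ℕ}
    (hn : l * (Bd + D) ≤ n) : (Bd : ℤ) ≤ jIdx hl v X e n := by
  have hq : Bd + D ≤ n / l := by
    rw [Nat.le_div_iff_mul_le hl, Nat.mul_comm]; exact hn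
  have hq' : ((Bd : ℤ) + D) ≤ ((n / l : ℕ) : ℤ) := by exact_mod_cast hq
  have he' : (1 : ℤ) ≤ e := by exact_mod_cast he
  have hmul : ((Bd : ℤ) + D) ≤ ((n / l : ℕ) : ℤ) * e := by
    calc ((Bd : ℤ) + D) ≤ ((n / l : ℕ) : ℤ) := hq'
      _ = ((n / l : ℕ) : ℤ) * 1 := (mul_one _).symm
      _ ≤ ((n / l : ℕ) : ℤ) * e := by
          apply mul_le_mul_of_nonneg_left he' (by positivity)
  have := hD (cIdx hl n)
  rw [jIdx]; linarith

lemma head_eq (hl : 0 < l) (v : Fin l → ℤ) (X : ℤ) (e : ℕ) (n : ℕ) :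
    (((v (cIdx hl n) - jIdx hl v X e n : ℤ) : ZMod e)) = ((X : ZMod e)) := by
  rw [jIdx]
  push_cast
  simp [ZMod.natCast_self]

lemma mem_iff_lt_card {s : Finset ℕ}
    (h : ∀ n ∈ s, ∀ m, m ≤ n → m ∈ s) (n : ℕ) : n ∈ s ↔ n < s.card := by
  constructor
  · intro hn
    have hsub : Finset.range (n + 1) ⊆ s := fun m hm =>
      h n hn m (by simpa using Nat.lt_succ_iff.mp (Finset.mem_range.mp hm))
    have := Finset.card_le_card hsub
    simpa using this
  · intro hn
    by_contra hns
    have hsub : s ⊆ Finset.range n := by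
      intro m hm
      rw [Finset.mem_range]
      by_contra hmn
      exact hns (h m hm n (le_of_not_gt hmn))
    have := Finset.card_le_card hsub
    simp at this; omega

lemma antitone_determined {F G : ℕ → ℕ} {N : ℕ}
    (hF : ∀ n, F (n + 1) ≤ F n) (hG : ∀ n, G (n + 1) ≤ G n)
    (hFN : ∀ n, N ≤ n → F n = 0) (hGN : ∀ n, N ≤ n → G n = 0)
    (hcard : ∀ k, 1 ≤ k →
      ((Finset.range N).filter fun n => k ≤ F n).card =
        ((Finset.range N).filter fun n => k ≤ G n).card) :
    F = G := by
  have hFanti : Antitone F := antitone_nat_of_succ_le hF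
  have hGanti : Antitone G := antitone_nat_of_succ_le hG
  have key : ∀ H : ℕ → ℕ, Antitone H → (∀ n, N ≤ n → H n = 0) →
      ∀ k, 1 ≤ k → ∀ n,
        (k ≤ H n ↔ n < ((Finset.range N).filter fun m => k ≤ H m).card) := by
    intro H hanti hN0 k hk n
    have hdc : ∀ a ∈ (Finset.range N).filter fun m => k ≤ H m,
        ∀ b, b ≤ a → b ∈ (Finset.range N).filter fun m => k ≤ H m := by
      intro a ha b hba
      rw [Finset.mem_filter, Finset.mem_range] at ha ⊢
      exact ⟨lt_of_le_of_lt hba ha.1, le_trans ha.2 (hanti hba)⟩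
    rw [← mem_iff_lt_card hdc, Finset.mem_filter, Finset.mem_range]
    constructor
    · intro hkH
      refine ⟨?_, hkH⟩
      by_contra hnN
      have := hN0 n (le_of_not_gt hnN)
      omega
    · exact fun hx => hx.2
  funext n
  by_cases hF0 : F n = 0
  · by_cases hG0 : G n = 0
    · rw [hF0, hG0]
    · exfalso
      have h1 : 1 ≤ G n := Nat.one_le_iff_ne_zero.mpr hG0
      have h2 := (key G hGanti hGN 1 le_rfl n).mp h1
      rw [← hcard 1 le_rfl] at h2
      have := (key F hFanti hFN 1 le_rfl n).mpr h2
      omega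
  · have h1 : 1 ≤ F n := Nat.one_le_iff_ne_zero.mpr hF0
    have le1 : F n ≤ G n := by
      have h2 := (key F hFanti hFN (F n) h1 n).mp le_rfl
      rw [hcard _ h1] at h2
      exact (key G hGanti hGN (F n) h1 n).mpr h2
    have h1' : 1 ≤ G n := by omega
    have le2 : G n ≤ F n := by
      have h2 := (key G hGanti hGN (G n) h1' n).mp le_rfl
      rw [← hcard _ h1'] at h2
      exact (key F hFanti hFN (G n) h1' n).mpr h2
    omega

lemma fv_count (e : ℕ) {l : ℕ} (v : Fin l → ℤ) (p : Fin l → ℕ → ℕ)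
    (B : ℕ) (hB : ∀ c j, B ≤ j → p c j = 0) (x : ZMod e × ℕ) :
    (fv e v p).count x =
      ((Finset.univ ×ˢ Finset.range B).filter fun cj : Fin l × ℕ =>
        0 < p cj.1 cj.2 ∧
          ((((v cj.1 - (cj.2 : ℤ)) : ℤ) : ZMod e), p cj.1 cj.2) = x).card := by
  classical
  have hinner : ∀ c : Fin l,
      (∑ᶠ j : ℕ, if 0 < p c j then
          ({(((v c - (j : ℤ) : ℤ) : ZMod e), p c j)} : Multisegment e) else 0) =
        ∑ j ∈ Finset.range B, (if 0 < p c j then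
          ({(((v c - (j : ℤ) : ℤ) : ZMod e), p c j)} : Multisegment e) else 0) := by
    intro c
    apply finsum_eq_finset_sum_of_support_subset
    intro j hj
    simp only [Function.mem_support, ne_eq] at hj
    rw [Finset.coe_range, Set.mem_Iio]
    by_contra hjB
    have := hB c j (le_of_not_gt hjB)
    simp [this] at hj
  have h1 : fv e v p = ∑ c : Fin l, ∑ j ∈ Finset.range B,
      (if 0 < p c j then
        ({(((v c - (j : ℤ) : ℤ) : ZMod e), p c j)} : Multisegment e) else 0) := by
    rw [fv, finsum_eq_sum_of_fintype]
    exact Finset.sum_congr rfl fun c _ => hinner c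
  rw [h1, Finset.card_filter, Finset.sum_product]
  rw [Multiset.count_sum']
  refine Finset.sum_congr rfl fun c _ => ?_
  rw [Multiset.count_sum']
  refine Finset.sum_congr rfl fun j _ => ?_
  by_cases h0 : 0 < p c j
  · rw [if_pos h0, Multiset.count_singleton]
    simp [h0, eq_comm]
  · rw [if_neg h0]
    simp [h0]

lemma Tk_card (hl : 0 < l) (v : Fin l → ℤ) (X : ℤ) (e : ℕ) (he : 0 < e)
    (K N B k : ℕ) (hk : 1 ≤ k) (hkK : k ≤ K)
    (p : Fin l → ℕ → ℕ)
    (hB : ∀ c j, B ≤ j → p c j = 0)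
    (hX : ∀ c, v c ≤ X)
    (hNB : ∀ n, N ≤ n → (B : ℤ) ≤ jIdx hl v X e n) :
    ((Finset.range N).filter fun n => k ≤ rowF hl v X e K p n).card =
      ((Finset.range N).filter fun n => jIdx hl v X e n < 0).card +
        ((Finset.univ ×ˢ Finset.range B).filter fun cj : Fin l × ℕ =>
          (((v cj.1 - (cj.2 : ℤ) : ℤ) : ZMod e) = (X : ZMod e)) ∧
            k ≤ p cj.1 cj.2).card := by
  classical
  rw [← Finset.card_filter_add_card_filter_not
    (p := fun n => jIdx hl v X e n < 0)
    (s := (Finset.range N).filter fun n => k ≤ rowF hl v X e K p n)]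
  congr 1
  · -- contributions of the sentinel rows
    congr 1
    rw [Finset.filter_filter]
    apply Finset.filter_congr
    intro n hn
    rw [Finset.mem_range] at hn
    simp only [iff_iff_implies_and_implies]
    constructor
    · exact fun hx => hx.2
    · intro hneg
      refine ⟨?_, hneg⟩
      rw [rowF, if_neg (not_le.mpr hneg)]
      exact hkK
  · -- true rows are in bijection with the rows of the partition
    rw [Finset.filter_filter]
    apply Finset.card_bij
      (i := fun n _ => ((cIdx hl n, (jIdx hl v X e n).toNat) : Fin l × ℕ))
    · intro n hn
      simp only [Finset.mem_filter, Finset.mem_range, not_lt] at hn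
      obtain ⟨hnN, hkF, hj0⟩ := hn
      rw [rowF, if_pos hj0] at hkF
      have hjB : (jIdx hl v X e n).toNat < B := by
        by_contra hc
        have := hB (cIdx hl n) _ (le_of_not_gt hc)
        omega
      simp only [Finset.mem_filter, Finset.mem_product, Finset.mem_univ,
        Finset.mem_range, true_and]
      refine ⟨hjB, ?_, hkF⟩
      have htn : ((jIdx hl v X e n).toNat : ℤ) = jIdx hl v X e n :=
        Int.toNat_of_nonneg hj0
      rw [htn]
      exact head_eq hl v X e n
    · intro n hn n' hn' heq
      simp only [Finset.mem_filter, Finset.mem_range, not_lt] at hn hn'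
      obtain ⟨hceq, hjeq⟩ := Prod.ext_iff.mp heq
      simp only at hceq hjeq
      apply row_inj hl v X e he hceq
      have h1 := Int.toNat_of_nonneg hn.2.2
      have h2 := Int.toNat_of_nonneg hn'.2.2
      omega
    · intro cj hcj
      simp only [Finset.mem_filter, Finset.mem_product, Finset.mem_univ,
        Finset.mem_range, true_and] at hcj
      obtain ⟨hjB, hhead, hkp⟩ := hcj
      have hdvd : (e : ℤ) ∣ X - v cj.1 + (cj.2 : ℤ) := by
        have h1 := (ZMod.intCast_eq_intCast_iff _ _ _).mp hhead
        have hd := Int.ModEq.dvd h1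
        have heq2 : X - v cj.1 + (cj.2 : ℤ) = X - (v cj.1 - (cj.2 : ℤ)) := by ring
        rw [heq2]
        exact hd
      obtain ⟨n, hcn, hjn⟩ := row_surj hl v X e he cj.1 (cj.2 : ℤ)
        (Int.natCast_nonneg _) (hX _) hdvd
      have hj0 : 0 ≤ jIdx hl v X e n := by rw [hjn]; exact Int.natCast_nonneg _
      have hFn : rowF hl v X e K p n = p cj.1 cj.2 := by
        rw [rowF, if_pos hj0, hcn, hjn, Int.toNat_natCast]
      have hnN : n < N := by
        by_contra hge
        have h2 := hNB n (le_of_not_gt hge)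
        rw [hjn] at h2
        have h3 : B ≤ cj.2 := by exact_mod_cast h2
        omega
      refine ⟨n, ?_, ?_⟩
      · simp only [Finset.mem_filter, Finset.mem_range, not_lt]
        exact ⟨hnN, by rw [hFn]; exact hkp, hj0⟩
      · rw [hcn, hjn, Int.toNat_natCast]

lemma rowcard_eq_sum (e : ℕ) {l : ℕ} (v : Fin l → ℤ) (p : Fin l → ℕ → ℕ)
    (B K k : ℕ) (hk : 1 ≤ k) (hpK : ∀ c j, p c j < K) (i : ZMod e) :
    ((Finset.univ ×ˢ Finset.range B).filter fun cj : Fin l × ℕ =>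
        (((v cj.1 - (cj.2 : ℤ) : ℤ) : ZMod e) = i) ∧ k ≤ p cj.1 cj.2).card =
      ∑ k' ∈ Finset.Ico k K,
        ((Finset.univ ×ˢ Finset.range B).filter fun cj : Fin l × ℕ =>
          0 < p cj.1 cj.2 ∧
            ((((v cj.1 - (cj.2 : ℤ)) : ℤ) : ZMod e), p cj.1 cj.2) = (i, k')).card := by
  classical
  rw [Finset.card_eq_sum_card_fiberwise
    (f := fun cj : Fin l × ℕ => p cj.1 cj.2) (t := Finset.Ico k K)
    (fun cj hcj => by
      simp only [Finset.mem_coe, Finset.mem_filter] at hcj ⊢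
      rw [Finset.mem_Ico]
      exact ⟨hcj.2.2, hpK _ _⟩)]
  refine Finset.sum_congr rfl fun k' hk' => ?_
  rw [Finset.mem_Ico] at hk'
  congr 1
  rw [Finset.filter_filter]
  apply Finset.filter_congr
  intro cj _
  constructor
  · rintro ⟨⟨hh, hkp⟩, hpe⟩
    exact ⟨by omega, by rw [Prod.ext_iff]; exact ⟨hh, hpe⟩⟩
  · rintro ⟨hpos, hpe⟩
    rw [Prod.ext_iff] at hpe
    simp only at hpe
    exact ⟨⟨hpe.1, by omega⟩, hpe.2⟩

end InjAux

/-- For every multicharge `v ∈ V_l`, the map `f_v` is injective on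
FLOTW `l`-partitions. -/
theorem fv_injective (e : ℕ) (he : 2 ≤ e) {l : ℕ} (hl : 0 < l)
    (v : Fin l → ℤ) (hv : IsMulticharge e v)
    (p q : Fin l → ℕ → ℕ) (hp : FLOTW e v p) (hq : FLOTW e v q)
    (h : fv e v p = fv e v q) :
    p = q := by
  classical
  have he0 : 0 < e := by omega
  haveI : NeZero e := ⟨by omega⟩
  obtain ⟨hvmono, hvd⟩ := hv
  obtain ⟨⟨hpdec, hpbd⟩, hp2, hp3, -⟩ := hp
  obtain ⟨⟨hqdec, hqbd⟩, hq2, hq3, -⟩ := hq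
  choose Bp hBp using hpbd
  choose Bq hBq using hqbd
  set B : ℕ := max (Finset.univ.sup Bp) (Finset.univ.sup Bq) with hBdef
  have hBP : ∀ c j, B ≤ j → p c j = 0 := fun c j hj =>
    hBp c j (le_trans (le_trans (Finset.le_sup (Finset.mem_univ c))
      (le_max_left _ _)) hj)
  have hBQ : ∀ c j, B ≤ j → q c j = 0 := fun c j hj =>
    hBq c j (le_trans (le_trans (Finset.le_sup (Finset.mem_univ c))
      (le_max_right _ _)) hj)
  have hpanti : ∀ c, Antitone (p c) := fun c =>
    antitone_nat_of_succ_le fun j => hpdec c j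
  have hqanti : ∀ c, Antitone (q c) := fun c =>
    antitone_nat_of_succ_le fun j => hqdec c j
  set K : ℕ := (Finset.univ.sup fun c => max (p c 0) (q c 0)) + 1 with hKdef
  have hpK : ∀ c j, p c j < K := by
    intro c j
    have h1 : p c j ≤ p c 0 := hpanti c (Nat.zero_le j)
    have h2 : max (p c 0) (q c 0) ≤ Finset.univ.sup fun c => max (p c 0) (q c 0) :=
      Finset.le_sup (f := fun c => max (p c 0) (q c 0)) (Finset.mem_univ c)
    have h3 : p c 0 ≤ max (p c 0) (q c 0) := le_max_left _ _
    omega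
  have hqK : ∀ c j, q c j < K := by
    intro c j
    have h1 : q c j ≤ q c 0 := hqanti c (Nat.zero_le j)
    have h2 : max (p c 0) (q c 0) ≤ Finset.univ.sup fun c => max (p c 0) (q c 0) :=
      Finset.le_sup (f := fun c => max (p c 0) (q c 0)) (Finset.mem_univ c)
    have h3 : q c 0 ≤ max (p c 0) (q c 0) := le_max_right _ _
    omega
  have hcount : ∀ x, (fv e v p).count x = (fv e v q).count x := fun x => by rw [h]
  funext c
  funext j
  -- work with the residue class of the row `(c, j)`
  set i : ZMod e := (((v c - (j : ℤ)) : ℤ) : ZMod e) with hidef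
  set M : ℕ := Finset.univ.sup fun c' => (v c').toNat with hMdef
  set X : ℤ := (i.val : ℤ) + (e : ℤ) * (M : ℤ) with hXdef
  have hXi : ((X : ℤ) : ZMod e) = i := by
    have hval : ((i.val : ℕ) : ZMod e) = i := ZMod.natCast_rightInverse i
    rw [hXdef]
    push_cast
    rw [hval]
    simp [ZMod.natCast_self]
  have hXv : ∀ c', v c' ≤ X := by
    intro c'
    have h1 : (v c').toNat ≤ M := Finset.le_sup (f := fun c' => (v c').toNat) (Finset.mem_univ c')
    have h2 : (1 : ℤ) ≤ (e : ℤ) := by exact_mod_cast he0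
    have h3 : (M : ℤ) ≤ (e : ℤ) * M := le_mul_of_one_le_left (by positivity) h2
    have h4 : v c' ≤ ((v c').toNat : ℤ) := Int.self_le_toNat _
    have h5 : ((v c').toNat : ℤ) ≤ (M : ℤ) := by exact_mod_cast h1
    have h6 : (0 : ℤ) ≤ (i.val : ℤ) := Int.natCast_nonneg _
    rw [hXdef]
    omega
  set D : ℕ := Finset.univ.sup fun c' => (X - v c').toNat with hDdef
  set N : ℕ := l * (B + D) with hNdef
  have hNB : ∀ n, N ≤ n → (B : ℤ) ≤ jIdx hl v X e n := by
    intro n hn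
    apply jIdx_large hl v X e he0 D B _ hn
    intro c'
    have h1 : (X - v c').toNat ≤ D := Finset.le_sup (f := fun c' => (X - v c').toNat) (Finset.mem_univ c')
    omega
  have hFNp : ∀ n, N ≤ n → rowF hl v X e K p n = 0 := by
    intro n hn
    have h1 := hNB n hn
    rw [rowF, if_pos (by omega)]
    exact hBP _ _ (by omega)
  have hFNq : ∀ n, N ≤ n → rowF hl v X e K q n = 0 := by
    intro n hn
    have h1 := hNB n hn
    rw [rowF, if_pos (by omega)]
    exact hBQ _ _ (by omega)
  have hcard : ∀ k, 1 ≤ k →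
      ((Finset.range N).filter fun n => k ≤ rowF hl v X e K p n).card =
        ((Finset.range N).filter fun n => k ≤ rowF hl v X e K q n).card := by
    intro k hk
    by_cases hkK : k ≤ K
    · rw [Tk_card hl v X e he0 K N B k hk hkK p hBP hXv hNB,
        Tk_card hl v X e he0 K N B k hk hkK q hBQ hXv hNB]
      congr 1
      rw [rowcard_eq_sum e v p B K k hk hpK ((X : ZMod e)),
        rowcard_eq_sum e v q B K k hk hqK ((X : ZMod e))]
      refine Finset.sum_congr rfl fun k' _ => ?_
      rw [← fv_count e v p B hBP (((X : ZMod e)), k'),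
        ← fv_count e v q B hBQ (((X : ZMod e)), k')]
      exact hcount _
    · have hemp : ∀ r : Fin l → ℕ → ℕ, (∀ c' j', r c' j' < K) →
          ((Finset.range N).filter fun n => k ≤ rowF hl v X e K r n) = ∅ := by
        intro r hrK
        apply Finset.filter_false_of_mem
        intro n _
        rw [not_le, rowF]
        split
        · exact lt_of_lt_of_le (hrK _ _) (by omega)
        · omega
      rw [hemp p hpK, hemp q hqK]
  have hFeq :=
    antitone_determined
      (rowF_succ_le hl v X e K p hvmono hvd (fun c' j' => le_of_lt (hpK c' j'))
        hp2 (hp3 hl))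
      (rowF_succ_le hl v X e K q hvmono hvd (fun c' j' => le_of_lt (hqK c' j'))
        hq2 (hq3 hl))
      hFNp hFNq hcard
  have hdvd : (e : ℤ) ∣ X - v c + (j : ℤ) := by
    have h1 : ((X : ℤ) : ZMod e) = (((v c - (j : ℤ)) : ℤ) : ZMod e) := hXi
    have h2 := Int.ModEq.dvd ((ZMod.intCast_eq_intCast_iff _ _ _).mp h1)
    have h3 : X - v c + (j : ℤ) = -((v c - (j : ℤ)) - X) := by ring
    rw [h3]
    exact dvd_neg.mpr h2
  obtain ⟨n, hcn, hjn⟩ :=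
    row_surj hl v X e he0 c (j : ℤ) (Int.natCast_nonneg _) (hXv c) hdvd
  have hj0 : 0 ≤ jIdx hl v X e n := by rw [hjn]; exact Int.natCast_nonneg _
  have h1 : rowF hl v X e K p n = p c j := by
    rw [rowF, if_pos hj0, hcn, hjn, Int.toNat_natCast]
  have h2 : rowF hl v X e K q n = q c j := by
    rw [rowF, if_pos hj0, hcn, hjn, Int.toNat_natCast]
  rw [← h1, ← h2, hFeq]


end AffineA
end

section
/- Let ψ be an aperiodic multisegment, l ≥ 1, and v ∈ V_l. For i ∈ ℤ/eℤ, let κ_i(v) = #{c ∈ {0,…,l−1} : v_c ≡ i (mod e)}. Then there exists a FLOTW l-partition λ ∈ Φ_e(v) with f_v(λ) = ψ if and only if κ_i(v) ≥ r̂_i(ψ) for every i ∈ ℤ/eℤ. -/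
namespace AffineA

variable {e : ℕ}

section Reduction

lemma step_push_R (s : List Letter) (k : ℕ) : step s (false, k) = (false, k) :: s := by
  cases s with
  | nil => rfl
  | cons a t =>
    rcases a with ⟨b, m⟩
    cases b <;> rfl

lemma step_pop (m : ℕ) (t : List Letter) (k : ℕ) :
    step ((false, m) :: t) (true, k) = t := rfl

lemma replicate_append_cons (n : ℕ) (a : Letter) (s : List Letter) :
    List.replicate n a ++ a :: s = a :: (List.replicate n a ++ s) := by
  have h : a :: List.replicate n a = List.replicate n a ++ [a] := by
    rw [← List.replicate_succ, List.replicate_succ']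
  rw [show a :: (List.replicate n a ++ s) = (a :: List.replicate n a) ++ s from rfl, h]
  simp

lemma foldl_step_replicate_R (p k : ℕ) :
    ∀ s, List.foldl step s (List.replicate p (false, k)) = List.replicate p (false, k) ++ s := by
  induction p with
  | zero => intro s; rfl
  | succ p ih =>
    intro s
    rw [List.replicate_succ, List.foldl_cons, step_push_R, ih, replicate_append_cons]
    rfl

lemma foldl_step_replicate_A :
    ∀ (q : ℕ) (Rs As : List Letter) (k : ℕ), (∀ x ∈ Rs, x.1 = false) →
      (∀ x ∈ As, x.1 = true) →
    List.foldl step (Rs ++ As) (List.replicate q (true, k)) =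
      List.drop q Rs ++ (List.replicate (q - Rs.length) (true, k) ++ As) := by
  intro q
  induction q with
  | zero => simp
  | succ q ih =>
    intro Rs As k hR hA
    rw [List.replicate_succ, List.foldl_cons]
    cases Rs with
    | nil =>
      have hstep : step As (true, k) = (true, k) :: As := by
        cases As with
        | nil => rfl
        | cons a t =>
          have ha : a.1 = true := hA a (by simp)
          rcases a with ⟨b, m⟩
          cases b
          · simp at ha
          · rfl
      simp only [List.nil_append]
      rw [hstep]
      have h2 := ih [] ((true, k) :: As) k (by simp)
        (by intro x hx; rcases List.mem_cons.mp hx with h | h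
            · subst h; rfl
            · exact hA x h)
      simp only [List.nil_append] at h2
      rw [h2]
      simp only [List.drop_nil, List.nil_append, List.length_nil, Nat.sub_zero]
      rw [replicate_append_cons]
      rw [List.replicate_succ]
      rfl
    | cons r Rs' =>
      have hr : r.1 = false := hR r (by simp)
      rcases r with ⟨b, m⟩
      cases b
      · rw [List.cons_append, step_pop]
        rw [ih Rs' As k (fun x hx => hR x (List.mem_cons_of_mem _ hx)) hA]
        simp
      · simp at hr

def rseqR (fR fA : ℕ → ℕ) : ℕ → ℕ
  | 0 => 0
  | N + 1 => (rseqR fR fA N + fR (N + 1)) - fA (N + 1)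

lemma reduce_word_shape (fR fA : ℕ → ℕ) (N : ℕ) :
    ∃ Rs As : List Letter, reduce (word N fR fA) = Rs ++ As ∧
      Rs.length = rseqR fR fA N ∧ (∀ x ∈ Rs, x.1 = false) ∧ (∀ x ∈ As, x.1 = true) := by
  induction N with
  | zero => exact ⟨[], [], rfl, rfl, by simp, by simp⟩
  | succ N ih =>
    obtain ⟨Rs, As, h1, h2, h3, h4⟩ := ih
    have hw : word (N + 1) fR fA = word N fR fA ++
        (List.replicate (fR (N + 1)) ((false : Bool), N + 1) ++
          List.replicate (fA (N + 1)) ((true : Bool), N + 1)) := by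
      unfold word
      rw [List.range_succ, List.flatMap_append]
      simp
    have hred : reduce (word (N + 1) fR fA) =
        List.foldl step (Rs ++ As)
          (List.replicate (fR (N + 1)) ((false : Bool), N + 1) ++
            List.replicate (fA (N + 1)) ((true : Bool), N + 1)) := by
      unfold reduce at h1 ⊢
      rw [hw, List.foldl_append, h1]
    rw [List.foldl_append, foldl_step_replicate_R] at hred
    rw [← List.append_assoc] at hred
    rw [foldl_step_replicate_A (fA (N+1)) (List.replicate (fR (N + 1)) ((false : Bool), N + 1) ++ Rs) As (N+1)
      (by intro x hx; rcases List.mem_append.mp hx with h | h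
          · exact (List.eq_of_mem_replicate h) ▸ rfl
          · exact h3 x h) h4] at hred
    refine ⟨_, _, hred, ?_, ?_, ?_⟩
    · simp only [List.length_drop, List.length_append, List.length_replicate, h2]
      simp only [rseqR]
      omega
    · intro x hx
      have := List.mem_of_mem_drop hx
      rcases List.mem_append.mp this with h | h
      · exact (List.eq_of_mem_replicate h) ▸ rfl
      · exact h3 x h
    · intro x hx
      rcases List.mem_append.mp hx with h | h
      · exact (List.eq_of_mem_replicate h) ▸ rfl
      · exact h4 x h

lemma rHat_eq_rseqR (ψ : Multisegment e) (i : ZMod e) :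
    rHat ψ i = rseqR (fun l => ψ.count (i, l)) (fun l => ψ.count (i + 1, l)) (bound ψ) := by
  obtain ⟨Rs, As, h1, h2, h3, h4⟩ :=
    reduce_word_shape (fun l => ψ.count (i, l)) (fun l => ψ.count (i + 1, l)) (bound ψ)
  unfold rHat wHat
  rw [h1, List.filter_append]
  have hR : Rs.filter (fun x => !x.1) = Rs := by
    apply List.filter_eq_self.mpr
    intro x hx; rw [h3 x hx]; rfl
  have hA : As.filter (fun x => !x.1) = [] := by
    apply List.filter_eq_nil_iff.mpr
    intro x hx; rw [h4 x hx]; simp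
  rw [hR, hA, List.length_append, List.length_nil, h2]
  omega


lemma rseqR_le_iff (fR fA : ℕ → ℕ) :
    ∀ (N : ℕ) (κ : ℕ), rseqR fR fA N ≤ κ ↔
      ∀ L, 1 ≤ L → L ≤ N →
        ∑ l ∈ Finset.Icc L N, fR l ≤ ∑ l ∈ Finset.Icc L N, fA l + κ := by
  intro N
  induction N with
  | zero =>
    intro κ
    simp only [rseqR]
    constructor
    · intro _ L h1 h0; omega
    · intro _; exact Nat.zero_le κ
  | succ N ih =>
    intro κ
    have hstep : rseqR fR fA (N + 1) ≤ κ ↔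
        fR (N + 1) ≤ fA (N + 1) + κ ∧
          rseqR fR fA N ≤ (fA (N + 1) + κ) - fR (N + 1) := by
      show rseqR fR fA N + fR (N+1) - fA (N+1) ≤ κ ↔ _
      omega
    rw [hstep, ih]
    constructor
    · rintro ⟨hb, h⟩ L h1 hLN
      rcases Nat.lt_or_ge L (N + 1) with hL | hL
      · have hL' : L ≤ N := by omega
        have := h L h1 hL'
        rw [Finset.sum_Icc_succ_top (by omega : L ≤ N + 1),
            Finset.sum_Icc_succ_top (by omega : L ≤ N + 1)]
        omega
      · have : L = N + 1 := by omega
        subst this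
        simp [hb]
    · intro h
      have hb : fR (N + 1) ≤ fA (N + 1) + κ := by
        have := h (N + 1) (by omega) le_rfl
        simpa using this
      refine ⟨hb, ?_⟩
      intro L h1 hLN
      have := h L h1 (by omega)
      rw [Finset.sum_Icc_succ_top (by omega : L ≤ N + 1),
          Finset.sum_Icc_succ_top (by omega : L ≤ N + 1)] at this
      omega

end Reduction
section Counting

/-- `N_i(L)`: the number of segments of `ψ` with head `i` and length `≥ L`. -/
def Ncount (ψ : Multisegment e) (i : ZMod e) (L : ℕ) : ℕ :=
  Multiset.card (ψ.filter fun p => p.1 = i ∧ L ≤ p.2)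

lemma Ncount_antitone (ψ : Multisegment e) (i : ZMod e) {L L' : ℕ} (h : L ≤ L') :
    Ncount ψ i L' ≤ Ncount ψ i L := by
  apply Multiset.card_le_card
  apply Multiset.monotone_filter_right
  intro p hp
  exact ⟨hp.1, le_trans h hp.2⟩

lemma Ncount_le_card (ψ : Multisegment e) (i : ZMod e) (L : ℕ) :
    Ncount ψ i L ≤ Multiset.card ψ :=
  Multiset.card_le_card (Multiset.filter_le _ _)

lemma snd_le_of_mem {ψ : Multisegment e} {p : ZMod e × ℕ} (hp : p ∈ ψ) :
    p.2 + 1 ≤ bound ψ := by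
  have h1 : p.2 ∈ ψ.map Prod.snd := Multiset.mem_map_of_mem _ hp
  have h2 : p.2 ≤ (ψ.map Prod.snd).sum :=
    Multiset.single_le_sum (fun x _ => Nat.zero_le x) _ h1
  unfold bound
  omega

lemma card_filter_eq_sum_count (s : Multiset (ZMod e × ℕ)) (i : ZMod e) (L B : ℕ)
    (hB : ∀ p ∈ s, p.2 < B) :
    Multiset.card (s.filter fun p => p.1 = i ∧ L ≤ p.2) =
      ∑ l ∈ Finset.Icc L B, s.count (i, l) := by
  induction s using Multiset.induction_on with
  | empty => simp
  | cons a s ih =>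
    have hB' : ∀ p ∈ s, p.2 < B := fun p hp => hB p (Multiset.mem_cons_of_mem hp)
    have ha : a.2 < B := hB a (Multiset.mem_cons_self a s)
    rw [Multiset.filter_cons]
    have hcount : ∀ l, Multiset.count (i, l) (a ::ₘ s) =
        Multiset.count (i, l) s + (if a.1 = i ∧ a.2 = l then 1 else 0) := by
      intro l
      rw [Multiset.count_cons]
      congr 1
      by_cases h : a.1 = i ∧ a.2 = l
      · have hia : (i, l) = a := by
          rcases a with ⟨a1, a2⟩
          obtain ⟨h1, h2⟩ := h
          simp_all
        simp [hia, h]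
      · have hia : ¬((i, l) = a) := by
          rcases a with ⟨a1, a2⟩
          simp only [Prod.mk.injEq]
          intro hcon
          exact h ⟨hcon.1.symm, hcon.2.symm⟩
        simp [hia, h]
    simp only [hcount, Finset.sum_add_distrib]
    have hsum : ∑ l ∈ Finset.Icc L B, (if a.1 = i ∧ a.2 = l then 1 else 0) =
        if a.1 = i ∧ L ≤ a.2 then 1 else 0 := by
      by_cases h1 : a.1 = i
      · simp only [h1, true_and]
        by_cases h2 : L ≤ a.2
        · rw [Finset.sum_ite_eq (Finset.Icc L B) a.2 (fun _ => 1)]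
          simp [h2, Nat.le_of_lt ha]
        · rw [Finset.sum_ite_eq (Finset.Icc L B) a.2 (fun _ => 1)]
          simp [h2]
      · simp [h1]
    rw [hsum, ← ih hB']
    by_cases h : a.1 = i ∧ L ≤ a.2
    · simp [h]
    · simp [h]

lemma Ncount_eq_sum (ψ : Multisegment e) (i : ZMod e) (L : ℕ) :
    Ncount ψ i L = ∑ l ∈ Finset.Icc L (bound ψ), ψ.count (i, l) :=
  card_filter_eq_sum_count ψ i L (bound ψ) (fun p hp => snd_le_of_mem hp)

lemma Ncount_succ (ψ : Multisegment e) (i : ZMod e) (L : ℕ) (hL : 1 ≤ L) :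
    Ncount ψ i L = ψ.count (i, L) + Ncount ψ i (L + 1) := by
  rw [Ncount_eq_sum, Ncount_eq_sum]
  rcases Nat.lt_or_ge (bound ψ) L with h | h
  · rw [Finset.Icc_eq_empty (by omega), Finset.Icc_eq_empty (by omega)]
    have : ψ.count (i, L) = 0 := by
      rw [Multiset.count_eq_zero]
      intro hmem
      have := snd_le_of_mem hmem
      simp at this
      omega
    simp [this]
  · have hins : Finset.Icc L (bound ψ) = insert L (Finset.Icc (L + 1) (bound ψ)) := by
      rw [Finset.Icc_add_one_left_eq_Ioc, Finset.Ioc_insert_left h]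
    rw [hins, Finset.sum_insert (by simp)]

lemma Ncount_zero_of_big (ψ : Multisegment e) (i : ZMod e) (L : ℕ) (h : bound ψ < L) :
    Ncount ψ i L = 0 := by
  rw [Ncount_eq_sum, Finset.Icc_eq_empty (by omega), Finset.sum_empty]

lemma rHat_le_iff (ψ : Multisegment e) (i : ZMod e) (κ : ℕ) :
    rHat ψ i ≤ κ ↔ ∀ L, 1 ≤ L → Ncount ψ i L ≤ Ncount ψ (i + 1) L + κ := by
  rw [rHat_eq_rseqR, rseqR_le_iff]
  constructor
  · intro h L h1
    rcases Nat.lt_or_ge (bound ψ) L with hB | hB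
    · rw [Ncount_zero_of_big ψ i L hB]
      exact Nat.zero_le _
    · rw [Ncount_eq_sum, Ncount_eq_sum]
      exact h L h1 hB
  · intro h L h1 hB
    have := h L h1
    rw [Ncount_eq_sum, Ncount_eq_sum] at this
    exact this

end Counting
section Rows

variable {l : ℕ}

/-- The residue of row `(c, j)`. -/
def rres (e : ℕ) (v : Fin l → ℤ) (c : Fin l) (j : ℕ) : ZMod e :=
  ((v c - (j : ℤ) : ℤ) : ZMod e)

/-- Number of coordinates of `v` congruent to `i` mod `e`. -/
def kap (e : ℕ) (v : Fin l → ℤ) (i : ZMod e) : ℕ :=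
  (Finset.univ.filter fun c : Fin l => ((v c : ZMod e) = i)).card

/-- Summand of `posRow`. -/
def rowTerm (e : ℕ) (v : Fin l → ℤ) (c : Fin l) (j : ℕ) (c' : Fin l) : ℕ :=
  if 0 ≤ v c' - v c + (j : ℤ) then
    ((v c' - v c + (j : ℤ)) / (e : ℤ)).toNat + (if c' < c then 1 else 0)
  else 0

/-- The position of the row `(c, j)` in its chain. -/
def posRow (e : ℕ) (v : Fin l → ℤ) (c : Fin l) (j : ℕ) : ℕ :=
  ∑ c' : Fin l, rowTerm e v c j c'

lemma int_ediv_succ (e : ℕ) (he : 1 ≤ e) (m : ℤ) :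
    (m + 1) / (e : ℤ) = m / (e : ℤ) + (if (e : ℤ) ∣ m + 1 then 1 else 0) := by
  have hepos : (0 : ℤ) < (e : ℤ) := by exact_mod_cast he
  set q := m / (e : ℤ) with hq
  have h1 : (e : ℤ) * q + m % (e : ℤ) = m := Int.mul_ediv_add_emod m (e : ℤ)
  have hr0 : 0 ≤ m % (e : ℤ) := Int.emod_nonneg m (by omega)
  have hre : m % (e : ℤ) < (e : ℤ) := Int.emod_lt_of_pos m hepos
  set r := m % (e : ℤ) with hrdef
  rcases eq_or_lt_of_le (by omega : r + 1 ≤ (e : ℤ)) with hcase | hcase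
  · have hdvd : (e : ℤ) ∣ m + 1 := ⟨q + 1, by linarith [mul_add (e:ℤ) q 1]⟩
    have : (m + 1) / (e : ℤ) = q + 1 := by
      have hm1 : m + 1 = (e : ℤ) * (q + 1) := by linarith [mul_add (e:ℤ) q 1]
      rw [hm1, Int.mul_ediv_cancel_left _ (by omega : (e:ℤ) ≠ 0)]
    rw [this, if_pos hdvd]
  · have hndvd : ¬ (e : ℤ) ∣ m + 1 := by
      rintro ⟨k, hk⟩
      have hd : (e : ℤ) ∣ r + 1 := ⟨k - q, by rw [mul_sub]; omega⟩
      have := Int.le_of_dvd (by omega) hd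
      omega
    have : (m + 1) / (e : ℤ) = q := by
      have hm1 : m + 1 = (r + 1) + (e : ℤ) * q := by omega
      rw [hm1, mul_comm (e:ℤ) q, Int.add_mul_ediv_right _ _ (by omega : (e:ℤ) ≠ 0),
        Int.ediv_eq_zero_of_lt (by omega) hcase, zero_add]
    rw [this, if_neg hndvd, add_zero]

lemma int_ediv_add_e (e : ℕ) (he : 1 ≤ e) (m : ℤ) :
    (m + (e : ℤ)) / (e : ℤ) = m / (e : ℤ) + 1 := by
  have : m + (e:ℤ) = m + (e:ℤ) * 1 := by ring
  rw [this, Int.add_mul_ediv_left _ _ (by omega : (e:ℤ) ≠ 0)]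

lemma rres_eq_iff (e : ℕ) (v : Fin l → ℤ) (c₁ c₂ : Fin l) (j₁ j₂ : ℕ) :
    rres e v c₁ j₁ = rres e v c₂ j₂ ↔
      (e : ℤ) ∣ (v c₁ - (j₁ : ℤ)) - (v c₂ - (j₂ : ℤ)) := by
  unfold rres
  rw [ZMod.intCast_eq_intCast_iff, Int.modEq_iff_dvd, dvd_sub_comm]

lemma zmod_eq_iff_dvd (e : ℕ) (a b : ℤ) :
    ((a : ZMod e) = (b : ZMod e)) ↔ (e : ℤ) ∣ a - b := by
  rw [ZMod.intCast_eq_intCast_iff, Int.modEq_iff_dvd, dvd_sub_comm]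

end Rows
section RowLemmas

variable {l : ℕ} {e : ℕ} {v : Fin l → ℤ}

lemma sum_ind_eq_kap (i : ZMod e) :
    (∑ c' : Fin l, (if (v c' : ZMod e) = i then 1 else 0)) = kap e v i :=
  (Finset.card_filter _ _).symm

/-- Moving one row down within a component: position jumps by `κ` of the new residue. -/
lemma posRow_succ_j (he : 2 ≤ e) (hm : Monotone v)
    (hs : ∀ c c' : Fin l, v c' - v c < (e : ℤ)) (c : Fin l) (j : ℕ) :
    posRow e v c (j + 1) = posRow e v c j + kap e v (rres e v c (j + 1)) := by
  have hterm : ∀ c', rowTerm e v c (j + 1) c' =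
      rowTerm e v c j c' + (if (v c' : ZMod e) = rres e v c (j + 1) then 1 else 0) := by
    intro c'
    unfold rowTerm
    have hj : (0:ℤ) ≤ (j:ℤ) := Int.natCast_nonneg j
    have hm1 : v c' - v c + ((j + 1 : ℕ) : ℤ) = (v c' - v c + (j:ℤ)) + 1 := by
      push_cast; ring
    rw [hm1]
    set m := v c' - v c + (j : ℤ) with hm0
    have hind : ((v c' : ZMod e) = rres e v c (j + 1)) ↔ (e:ℤ) ∣ m + 1 := by
      unfold rres
      rw [zmod_eq_iff_dvd, show v c' - (v c - ((j + 1 : ℕ) : ℤ)) = m + 1 by push_cast; ring]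
    by_cases h0 : 0 ≤ m
    · rw [if_pos (by omega : (0:ℤ) ≤ m + 1), if_pos h0, int_ediv_succ e (by omega) m]
      have hq : 0 ≤ m / (e:ℤ) := Int.ediv_nonneg h0 (by positivity)
      by_cases hd : (e:ℤ) ∣ m + 1
      · rw [if_pos hd, if_pos (hind.mpr hd)]
        omega
      · rw [if_neg hd, if_neg (fun hc => hd (hind.mp hc))]
        omega
    · push_neg at h0
      rw [if_neg (by omega : ¬ (0:ℤ) ≤ m)]
      rcases eq_or_lt_of_le (by omega : m + 1 ≤ 0) with hz | hz
      · rw [if_pos (by omega : (0:ℤ) ≤ m + 1)]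
        have hdvd : (e:ℤ) ∣ m + 1 := by rw [hz]; exact dvd_zero _
        rw [if_pos (hind.mpr hdvd)]
        have hc'c : c' < c := by
          by_contra hcc
          have h1 : c ≤ c' := not_lt.mp hcc
          have h2 := hm h1
          omega
        rw [if_pos hc'c, hz]
        simp
      · rw [if_neg (by omega : ¬ (0:ℤ) ≤ m + 1)]
        have hnd : ¬ (e:ℤ) ∣ m + 1 := by
          intro hd
          have h2 : (e:ℤ) ∣ -(m + 1) := (dvd_neg).mpr hd
          have h3 := Int.le_of_dvd (by omega) h2
          have h4 := hs c' c
          omega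
        rw [if_neg (fun hc => hnd (hind.mp hc))]
  unfold posRow
  rw [Finset.sum_congr rfl (fun c' _ => hterm c'), Finset.sum_add_distrib,
    sum_ind_eq_kap]

/-- Moving to the next component at the same level: position jumps by 1. -/
lemma posRow_succ_c (hm : Monotone v) (c₀ : ℕ) (h : c₀ + 1 < l) (j : ℕ) :
    posRow e v ⟨c₀ + 1, h⟩
        (j + (v ⟨c₀ + 1, h⟩ - v ⟨c₀, Nat.lt_of_succ_lt h⟩).toNat) =
      posRow e v ⟨c₀, Nat.lt_of_succ_lt h⟩ j + 1 := by
  set c1 : Fin l := ⟨c₀ + 1, h⟩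
  set c0 : Fin l := ⟨c₀, Nat.lt_of_succ_lt h⟩
  have hd : (0:ℤ) ≤ v c1 - v c0 := sub_nonneg.mpr (hm (by simp [c0, c1, Fin.mk_le_mk]))
  have hcast : ((j + (v c1 - v c0).toNat : ℕ) : ℤ) = (j : ℤ) + (v c1 - v c0) := by
    push_cast
    rw [Int.toNat_of_nonneg hd]
  have hterm : ∀ c', rowTerm e v c1 (j + (v c1 - v c0).toNat) c' =
      rowTerm e v c0 j c' + (if c' = c0 then 1 else 0) := by
    intro c'
    unfold rowTerm
    rw [hcast]
    have hmm : v c' - v c1 + ((j:ℤ) + (v c1 - v c0)) = v c' - v c0 + (j:ℤ) := by ring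
    rw [hmm]
    set m := v c' - v c0 + (j : ℤ) with hm0
    by_cases hc : c' = c0
    · have hv : v c' = v c0 := by rw [hc]
      have hmj : m = (j : ℤ) := by rw [hm0, hv]; ring
      rw [if_pos (by omega : (0:ℤ) ≤ m), if_pos (by omega : (0:ℤ) ≤ m)]
      have h1 : c' < c1 := by rw [hc]; simp [c1, c0, Fin.lt_def]
      have h2 : ¬ (c' < c0) := by rw [hc]; exact lt_irrefl _
      rw [if_pos h1, if_neg h2, if_pos hc]
    · have hne : c'.1 ≠ c₀ := fun hh => hc (Fin.ext hh)
      have hlt : (c' < c1) ↔ (c' < c0) := by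
        simp only [Fin.lt_def, c1, c0]
        omega
      rw [if_neg hc, add_zero]
      by_cases h0 : 0 ≤ m
      · rw [if_pos h0, if_pos h0]
        congr 1
        simp only [hlt]
      · rw [if_neg h0, if_neg h0]
  unfold posRow
  rw [Finset.sum_congr rfl (fun c' _ => hterm c'), Finset.sum_add_distrib,
    Finset.sum_ite_eq' Finset.univ c0 (fun _ => 1), if_pos (Finset.mem_univ c0)]

/-- Wrapping from the last component to the first, one level down. -/
lemma posRow_wrap (he : 2 ≤ e) (hl : 0 < l) (hm : Monotone v)
    (hs : ∀ c c' : Fin l, v c' - v c < (e : ℤ)) (j : ℕ) :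
    posRow e v ⟨0, hl⟩
        (j + ((e : ℤ) + v ⟨0, hl⟩ - v ⟨l - 1, Nat.sub_lt hl Nat.one_pos⟩).toNat) =
      posRow e v ⟨l - 1, Nat.sub_lt hl Nat.one_pos⟩ j + 1 := by
  set c0 : Fin l := ⟨0, hl⟩
  set cL : Fin l := ⟨l - 1, Nat.sub_lt hl Nat.one_pos⟩
  have hE : (0:ℤ) ≤ (e : ℤ) + v c0 - v cL := by
    have := hs c0 cL
    omega
  have hcast : ((j + ((e : ℤ) + v c0 - v cL).toNat : ℕ) : ℤ) =
      (j : ℤ) + ((e : ℤ) + v c0 - v cL) := by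
    push_cast
    rw [Int.toNat_of_nonneg hE]
  have hterm : ∀ c', rowTerm e v c0 (j + ((e : ℤ) + v c0 - v cL).toNat) c' =
      rowTerm e v cL j c' + (if c' = cL then 1 else 0) := by
    intro c'
    unfold rowTerm
    rw [hcast]
    have hmm : v c' - v c0 + ((j:ℤ) + ((e : ℤ) + v c0 - v cL)) =
        (v c' - v cL + (j:ℤ)) + (e:ℤ) := by ring
    rw [hmm]
    set m := v c' - v cL + (j : ℤ) with hm0
    have hlt0 : ¬ (c' < c0) := by simp [c0, Fin.lt_def]
    have hle : c'.1 ≤ l - 1 := by omega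
    by_cases h0 : 0 ≤ m
    · rw [if_pos (by omega : (0:ℤ) ≤ m + (e:ℤ)), if_pos h0,
        int_ediv_add_e e (by omega) m, if_neg hlt0]
      have hq : 0 ≤ m / (e:ℤ) := Int.ediv_nonneg h0 (by positivity)
      by_cases hcl : c' = cL
      · rw [if_neg (by rw [hcl]; exact lt_irrefl _), if_pos hcl]
        omega
      · have : c'.1 < l - 1 := by
          have : c'.1 ≠ l - 1 := fun hh => hcl (Fin.ext hh)
          omega
        rw [if_pos (by simp [cL, Fin.lt_def]; omega : c' < cL), if_neg hcl]
        omega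
    · push_neg at h0
      have hgt : -(e:ℤ) < v c' - v cL := by
        have := hs c' cL
        omega
      have hj : (0:ℤ) ≤ (j:ℤ) := Int.natCast_nonneg j
      rw [if_neg (by omega : ¬ (0:ℤ) ≤ m), if_pos (by omega : (0:ℤ) ≤ m + (e:ℤ))]
      have hdiv : (m + (e:ℤ)) / (e:ℤ) = 0 :=
        Int.ediv_eq_zero_of_lt (by omega) (by omega)
      have hcl : ¬ (c' = cL) := by
        intro hcl
        subst hcl
        have : m = (j:ℤ) := by rw [hm0]; ring
        omega
      rw [hdiv, if_neg hlt0, if_neg hcl]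
      simp
  unfold posRow
  rw [Finset.sum_congr rfl (fun c' _ => hterm c'), Finset.sum_add_distrib,
    Finset.sum_ite_eq' Finset.univ cL (fun _ => 1), if_pos (Finset.mem_univ cL)]

/-- Rows near the top of the first component have position 0. -/
lemma posRow_eq_zero_left (he : 2 ≤ e) (hl : 0 < l) (hm : Monotone v)
    (hs : ∀ c c' : Fin l, v c' - v c < (e : ℤ)) (j : ℕ)
    (hj : (j : ℤ) < (e : ℤ) + v ⟨0, hl⟩ - v ⟨l - 1, Nat.sub_lt hl Nat.one_pos⟩) :
    posRow e v ⟨0, hl⟩ j = 0 := by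
  set c0 : Fin l := ⟨0, hl⟩
  set cL : Fin l := ⟨l - 1, Nat.sub_lt hl Nat.one_pos⟩
  apply Finset.sum_eq_zero
  intro c' _
  unfold rowTerm
  have hlt0 : ¬ (c' < c0) := by simp [c0, Fin.lt_def]
  by_cases h0 : 0 ≤ v c' - v c0 + (j:ℤ)
  · rw [if_pos h0, if_neg hlt0]
    have hcle : v c' ≤ v cL := hm (by simp [cL, Fin.le_def]; omega)
    have hdiv : (v c' - v c0 + (j:ℤ)) / (e:ℤ) = 0 :=
      Int.ediv_eq_zero_of_lt h0 (by omega)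
    rw [hdiv]
    simp
  · rw [if_neg h0]

/-- Rows near the top of a middle component have position 0. -/
lemma posRow_eq_zero_mid (he : 2 ≤ e) (hm : Monotone v)
    (hs : ∀ c c' : Fin l, v c' - v c < (e : ℤ)) (c₀ : ℕ) (h : c₀ + 1 < l) (j : ℕ)
    (hj : (j : ℤ) < v ⟨c₀ + 1, h⟩ - v ⟨c₀, Nat.lt_of_succ_lt h⟩) :
    posRow e v ⟨c₀ + 1, h⟩ j = 0 := by
  set c1 : Fin l := ⟨c₀ + 1, h⟩
  set c0 : Fin l := ⟨c₀, Nat.lt_of_succ_lt h⟩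
  apply Finset.sum_eq_zero
  intro c' _
  unfold rowTerm
  by_cases hcc : c'.1 ≤ c₀
  · have hcle : v c' ≤ v c0 := hm (by simp [c0, Fin.le_def]; omega)
    rw [if_neg (by omega : ¬ (0:ℤ) ≤ v c' - v c1 + (j:ℤ))]
  · have hlt : ¬ (c' < c1) := by simp [c1, Fin.lt_def]; omega
    by_cases h0 : 0 ≤ v c' - v c1 + (j:ℤ)
    · rw [if_pos h0, if_neg hlt]
      have := hs c0 c'
      have hdiv : (v c' - v c1 + (j:ℤ)) / (e:ℤ) = 0 :=
        Int.ediv_eq_zero_of_lt h0 (by omega)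
      rw [hdiv]
      simp
    · rw [if_neg h0]

/-- A row's index is bounded in terms of its position. -/
lemma row_lt_of_posRow (he : 2 ≤ e) (c : Fin l) (j : ℕ) :
    j < e * (posRow e v c j + 1) := by
  have hterm : rowTerm e v c j c = ((j:ℤ) / (e:ℤ)).toNat := by
    unfold rowTerm
    rw [sub_self, zero_add, if_pos (Int.natCast_nonneg j), if_neg (lt_irrefl c)]
    omega
  have hle : ((j:ℤ) / (e:ℤ)).toNat ≤ posRow e v c j := by
    rw [← hterm]
    exact Finset.single_le_sum (f := fun c' => rowTerm e v c j c')
      (fun _ _ => Nat.zero_le _) (Finset.mem_univ c)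
  have hepos : (0:ℤ) < (e:ℤ) := by exact_mod_cast (by omega : 0 < e)
  set q := (j:ℤ) / (e:ℤ) with hq
  have h1 : (e : ℤ) * q + (j:ℤ) % (e:ℤ) = j := Int.mul_ediv_add_emod _ _
  have hr0 : 0 ≤ (j:ℤ) % (e:ℤ) := Int.emod_nonneg _ (by omega)
  have hre : (j:ℤ) % (e:ℤ) < (e:ℤ) := Int.emod_lt_of_pos _ hepos
  have hq0 : 0 ≤ q := Int.ediv_nonneg (Int.natCast_nonneg j) (le_of_lt hepos)
  have hqp : q + 1 ≤ (posRow e v c j : ℤ) + 1 := by omega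
  have hmul : (e:ℤ) * (q + 1) ≤ (e:ℤ) * ((posRow e v c j : ℤ) + 1) :=
    mul_le_mul_of_nonneg_left hqp (le_of_lt hepos)
  have : (j : ℤ) < (e:ℤ) * ((posRow e v c j : ℤ) + 1) := by
    have h2 : (j:ℤ) < (e:ℤ) * (q + 1) := by
      have : (e:ℤ) * (q + 1) = (e:ℤ) * q + (e:ℤ) := by ring
      omega
    omega
  exact_mod_cast this

end RowLemmas
section ChainLemmas

variable {l : ℕ} {e : ℕ} {v : Fin l → ℤ}

/-- The next row in the same chain. -/
def succRow (e : ℕ) (v : Fin l → ℤ) (hl : 0 < l) (r : Fin l × ℕ) : Fin l × ℕ :=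
  if h : r.1.1 + 1 < l then
    (⟨r.1.1 + 1, h⟩, r.2 + (v ⟨r.1.1 + 1, h⟩ - v r.1).toNat)
  else (⟨0, hl⟩, r.2 + ((e : ℤ) + v ⟨0, hl⟩ - v r.1).toNat)

lemma succRow_spec (he : 2 ≤ e) (hl : 0 < l) (hm : Monotone v)
    (hs : ∀ c c' : Fin l, v c' - v c < (e : ℤ)) (r : Fin l × ℕ) :
    rres e v (succRow e v hl r).1 (succRow e v hl r).2 = rres e v r.1 r.2 ∧
      posRow e v (succRow e v hl r).1 (succRow e v hl r).2 = posRow e v r.1 r.2 + 1 := by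
  obtain ⟨c, j⟩ := r
  unfold succRow
  by_cases h : c.1 + 1 < l
  · rw [dif_pos h]
    have hc : (⟨c.1, Nat.lt_of_succ_lt h⟩ : Fin l) = c := Fin.ext rfl
    constructor
    · unfold rres
      simp only
      congr 1
      have hd : (0:ℤ) ≤ v ⟨c.1 + 1, h⟩ - v c :=
        sub_nonneg.mpr (hm (by simp [Fin.le_def]))
      push_cast
      rw [Int.toNat_of_nonneg hd]
      ring
    · have hkey := posRow_succ_c (e := e) hm c.1 h j
      rw [hc] at hkey
      exact hkey
  · rw [dif_neg h]
    have hcL : c = ⟨l - 1, Nat.sub_lt hl Nat.one_pos⟩ := Fin.ext (show c.1 = l - 1 by have := c.isLt; omega)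
    have hE : (0:ℤ) ≤ (e : ℤ) + v ⟨0, hl⟩ - v c := by
      have := hs ⟨0, hl⟩ c
      omega
    constructor
    · unfold rres
      simp only
      rw [zmod_eq_iff_dvd]
      have hcast : ((j + ((e : ℤ) + v ⟨0, hl⟩ - v c).toNat : ℕ) : ℤ) =
          (j:ℤ) + ((e : ℤ) + v ⟨0, hl⟩ - v c) := by
        push_cast
        rw [Int.toNat_of_nonneg hE]
      rw [hcast]
      exact ⟨-1, by ring⟩
    · have hkey := posRow_wrap (e := e) (v := v) he hl hm hs j
      rw [← hcL] at hkey
      exact hkey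

lemma exists_pred (he : 2 ≤ e) (hl : 0 < l) (hm : Monotone v)
    (hs : ∀ c c' : Fin l, v c' - v c < (e : ℤ)) (c : Fin l) (j : ℕ)
    (hpos : posRow e v c j ≠ 0) :
    ∃ r : Fin l × ℕ, rres e v r.1 r.2 = rres e v c j ∧
      posRow e v r.1 r.2 + 1 = posRow e v c j ∧ succRow e v hl r = (c, j) := by
  rcases Nat.eq_zero_or_pos c.1 with hc | hc
  · have hc0 : c = ⟨0, hl⟩ := Fin.ext hc
    set cL : Fin l := ⟨l - 1, Nat.sub_lt hl Nat.one_pos⟩ with hcL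
    have hE : (0:ℤ) ≤ (e : ℤ) + v ⟨0, hl⟩ - v cL := by
      have := hs ⟨0, hl⟩ cL
      omega
    set E : ℕ := ((e : ℤ) + v ⟨0, hl⟩ - v cL).toNat with hEdef
    have hEcast : (E : ℤ) = (e : ℤ) + v ⟨0, hl⟩ - v cL := Int.toNat_of_nonneg hE
    have hjE : E ≤ j := by
      by_contra hlt
      push_neg at hlt
      apply hpos
      rw [hc0]
      apply posRow_eq_zero_left he hl hm hs
      show (j : ℤ) < (e : ℤ) + v ⟨0, hl⟩ - v cL
      omega
    refine ⟨(cL, j - E), ?_, ?_, ?_⟩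
    · rw [hc0]
      rw [rres_eq_iff]
      have : ((j - E : ℕ) : ℤ) = (j : ℤ) - (E : ℤ) := by
        push_cast [hjE]
        ring
      rw [this]
      exact ⟨1, by rw [hEcast]; ring⟩
    · have hkey := posRow_wrap (e := e) (v := v) he hl hm hs (j - E)
      have : j - E + E = j := by omega
      rw [← hcL, ← hEdef, this] at hkey
      rw [hc0, hkey]
    · unfold succRow
      rw [dif_neg (by simp [cL]; omega)]
      have : v (⟨l - 1, Nat.sub_lt hl Nat.one_pos⟩ : Fin l) = v cL := rfl
      rw [Prod.ext_iff]
      constructor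
      · exact hc0.symm
      · simp only [cL]
        rw [← hEdef]
        omega
  · obtain ⟨c₀, hc1⟩ : ∃ c₀, c.1 = c₀ + 1 := ⟨c.1 - 1, by omega⟩
    have h : c₀ + 1 < l := hc1 ▸ c.isLt
    have hcc : c = ⟨c₀ + 1, h⟩ := Fin.ext hc1
    set c0 : Fin l := ⟨c₀, Nat.lt_of_succ_lt h⟩ with hc0def
    have hd0 : (0:ℤ) ≤ v ⟨c₀ + 1, h⟩ - v c0 :=
      sub_nonneg.mpr (hm (by simp [Fin.le_def, c0]))
    set d : ℕ := (v ⟨c₀ + 1, h⟩ - v c0).toNat with hddef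
    have hdcast : (d : ℤ) = v ⟨c₀ + 1, h⟩ - v c0 := Int.toNat_of_nonneg hd0
    have hjd : d ≤ j := by
      by_contra hlt
      push_neg at hlt
      apply hpos
      rw [hcc]
      apply posRow_eq_zero_mid he hm hs c₀ h
      show (j : ℤ) < v ⟨c₀ + 1, h⟩ - v c0
      omega
    refine ⟨(c0, j - d), ?_, ?_, ?_⟩
    · rw [hcc]
      rw [rres_eq_iff]
      have : ((j - d : ℕ) : ℤ) = (j : ℤ) - (d : ℤ) := by
        push_cast [hjd]
        ring
      rw [this]
      exact ⟨0, by rw [hdcast]; ring⟩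
    · have hkey := posRow_succ_c (e := e) (v := v) hm c₀ h (j - d)
      have : j - d + d = j := by omega
      rw [← hc0def, ← hddef, this] at hkey
      rw [hcc, hkey]
    · unfold succRow
      have hfst : ((c0, j - d) : Fin l × ℕ).1.1 + 1 < l := h
      rw [dif_pos hfst]
      rw [Prod.ext_iff]
      constructor
      · exact (Fin.ext hc1.symm : (⟨c₀ + 1, h⟩ : Fin l) = c)
      · simp only [c0]
        rw [← hddef]
        omega

lemma pos_ne_zero_of_earlier (he : 2 ≤ e) (c₁ c₂ : Fin l) (j₁ j₂ : ℕ)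
    (hres : rres e v c₁ j₁ = rres e v c₂ j₂)
    (hlt : (v c₂ - (j₂:ℤ)) < (v c₁ - (j₁:ℤ)) ∨
      ((v c₁ - (j₁:ℤ)) = (v c₂ - (j₂:ℤ)) ∧ c₁ < c₂)) :
    posRow e v c₂ j₂ ≠ 0 := by
  have hterm : 1 ≤ rowTerm e v c₂ j₂ c₁ := by
    unfold rowTerm
    rcases hlt with hgt | ⟨heq, hcc⟩
    · have hdvd : (e:ℤ) ∣ (v c₁ - (j₁:ℤ)) - (v c₂ - (j₂:ℤ)) := (rres_eq_iff _ _ _ _ _ _).mp hres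
      have hge : (e:ℤ) ≤ (v c₁ - (j₁:ℤ)) - (v c₂ - (j₂:ℤ)) := Int.le_of_dvd (by omega) hdvd
      rw [if_pos (by omega : (0:ℤ) ≤ v c₁ - v c₂ + (j₂:ℤ))]
      have h1 : 1 ≤ (v c₁ - v c₂ + (j₂:ℤ)) / (e:ℤ) := by
        rw [Int.le_ediv_iff_mul_le (by exact_mod_cast (by omega : 0 < e))]
        omega
      omega
    · rw [if_pos (by omega : (0:ℤ) ≤ v c₁ - v c₂ + (j₂:ℤ)), if_pos hcc]
      omega
  intro h0
  have hle : rowTerm e v c₂ j₂ c₁ ≤ posRow e v c₂ j₂ :=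
    Finset.single_le_sum (f := fun c' => rowTerm e v c₂ j₂ c')
      (fun _ _ => Nat.zero_le _) (Finset.mem_univ c₁)
  omega

lemma posRow_inj (he : 2 ≤ e) (hl : 0 < l) (hm : Monotone v)
    (hs : ∀ c c' : Fin l, v c' - v c < (e : ℤ)) :
    ∀ (n : ℕ) (c₁ : Fin l) (j₁ : ℕ) (c₂ : Fin l) (j₂ : ℕ),
      rres e v c₁ j₁ = rres e v c₂ j₂ → posRow e v c₁ j₁ = n → posRow e v c₂ j₂ = n →
      (c₁, j₁) = (c₂, j₂) := by
  intro n
  induction n with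
  | zero =>
    intro c₁ j₁ c₂ j₂ hres h1 h2
    rcases lt_trichotomy (v c₁ - (j₁:ℤ)) (v c₂ - (j₂:ℤ)) with hh | hh | hh
    · exact absurd h1 (pos_ne_zero_of_earlier he c₂ c₁ j₂ j₁ hres.symm (Or.inl hh))
    · rcases lt_trichotomy c₁ c₂ with hcc | hcc | hcc
      · exact absurd h2 (pos_ne_zero_of_earlier he c₁ c₂ j₁ j₂ hres (Or.inr ⟨hh, hcc⟩))
      · subst hcc
        have : (j₁ : ℤ) = (j₂ : ℤ) := by omega
        have : j₁ = j₂ := by exact_mod_cast this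
        rw [this]
      · exact absurd h1 (pos_ne_zero_of_earlier he c₂ c₁ j₂ j₁ hres.symm (Or.inr ⟨hh.symm, hcc⟩))
    · exact absurd h2 (pos_ne_zero_of_earlier he c₁ c₂ j₁ j₂ hres (Or.inl hh))
  | succ n ih =>
    intro c₁ j₁ c₂ j₂ hres h1 h2
    obtain ⟨r₁, hres1, hpos1, hsucc1⟩ := exists_pred he hl hm hs c₁ j₁ (by omega)
    obtain ⟨r₂, hres2, hpos2, hsucc2⟩ := exists_pred he hl hm hs c₂ j₂ (by omega)
    have heq : r₁ = r₂ := by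
      have := ih r₁.1 r₁.2 r₂.1 r₂.2
        (by rw [hres1, hres2, hres]) (by omega) (by omega)
      exact Prod.ext (congrArg Prod.fst this) (congrArg Prod.snd this)
    rw [← hsucc1, ← hsucc2, heq]

lemma exists_zero_from (he : 2 ≤ e) (hl : 0 < l) (hm : Monotone v)
    (hs : ∀ c c' : Fin l, v c' - v c < (e : ℤ)) :
    ∀ (n : ℕ) (c : Fin l) (j : ℕ), posRow e v c j = n →
      ∃ r : Fin l × ℕ, rres e v r.1 r.2 = rres e v c j ∧ posRow e v r.1 r.2 = 0 := by
  intro n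
  induction n using Nat.strong_induction_on with
  | _ n ih =>
    intro c j hn
    rcases Nat.eq_zero_or_pos n with h0 | hp
    · exact ⟨(c, j), rfl, show posRow e v c j = 0 by omega⟩
    · obtain ⟨r', hres, hpos, _⟩ := exists_pred he hl hm hs c j (by omega)
      obtain ⟨r0, hr1, hr2⟩ := ih (n - 1) (by omega) r'.1 r'.2 (by omega)
      exact ⟨r0, by rw [hr1, hres], hr2⟩

lemma exists_row_at (he : 2 ≤ e) (hl : 0 < l) (hm : Monotone v)
    (hs : ∀ c c' : Fin l, v c' - v c < (e : ℤ)) (i : ZMod e) (n : ℕ) :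
    ∃ r : Fin l × ℕ, rres e v r.1 r.2 = i ∧ posRow e v r.1 r.2 = n := by
  induction n with
  | zero =>
    haveI : NeZero e := ⟨by omega⟩
    set j₀ : ℕ := (((v ⟨0, hl⟩ : ℤ) : ZMod e) - i).val with hj0
    have hres0 : rres e v ⟨0, hl⟩ j₀ = i := by
      unfold rres
      push_cast
      rw [hj0, ZMod.natCast_val, ZMod.cast_id]
      ring
    obtain ⟨r, h1, h2⟩ := exists_zero_from he hl hm hs (posRow e v ⟨0, hl⟩ j₀) ⟨0, hl⟩ j₀ rfl
    exact ⟨r, by rw [h1, hres0], h2⟩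
  | succ n ih =>
    obtain ⟨r, h1, h2⟩ := ih
    obtain ⟨hres, hpos⟩ := succRow_spec he hl hm hs r
    exact ⟨succRow e v hl r, by rw [hres, h1], by rw [hpos, h2]⟩

lemma card_chain (he : 2 ≤ e) (hl : 0 < l) (hm : Monotone v)
    (hs : ∀ c c' : Fin l, v c' - v c < (e : ℤ)) (i : ZMod e) (n J : ℕ)
    (hJ : e * n ≤ J) :
    ((Finset.univ ×ˢ Finset.range J).filter fun r : Fin l × ℕ =>
      rres e v r.1 r.2 = i ∧ posRow e v r.1 r.2 < n).card = n := by
  rw [← Finset.card_range n]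
  apply Finset.card_bij (fun (r : Fin l × ℕ) _ => posRow e v r.1 r.2)
  · intro a ha
    simp only [Finset.mem_filter] at ha
    simpa using ha.2.2
  · intro a ha b hb hab
    simp only [Finset.mem_filter] at ha hb
    have := posRow_inj he hl hm hs (posRow e v b.1 b.2) a.1 a.2 b.1 b.2
      (ha.2.1.trans hb.2.1.symm) hab rfl
    exact Prod.ext (congrArg Prod.fst this) (congrArg Prod.snd this)
  · intro b hb
    simp only [Finset.mem_range] at hb
    obtain ⟨r, h1, h2⟩ := exists_row_at he hl hm hs i b
    have hj : r.2 < J := by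
      have hlt := row_lt_of_posRow (v := v) he r.1 r.2
      rw [h2] at hlt
      have hmul : e * (b + 1) ≤ e * n := Nat.mul_le_mul_left e (by omega)
      omega
    refine ⟨r, ?_, h2⟩
    simp only [Finset.mem_filter, Finset.mem_product, Finset.mem_univ, true_and,
      Finset.mem_range]
    exact ⟨hj, h1, by rw [h2]; simpa using hb⟩

end ChainLemmas
section Construction

variable {l : ℕ} {e : ℕ} {v : Fin l → ℤ}

lemma downset_card (S : Finset ℕ) (B : ℕ) (hSB : S ⊆ Finset.Icc 1 B)
    (hdown : ∀ a ∈ S, ∀ b, 1 ≤ b → b ≤ a → b ∈ S) :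
    ∀ L, 1 ≤ L → (L ≤ S.card ↔ L ∈ S) := by
  intro L hL
  constructor
  · intro hcard
    by_contra hnot
    have hsub : S ⊆ Finset.Icc 1 (L - 1) := by
      intro b hb
      have hb' := hSB hb
      simp only [Finset.mem_Icc] at hb' ⊢
      refine ⟨hb'.1, ?_⟩
      by_contra hgt
      push_neg at hgt
      exact hnot (hdown b hb L hL (by omega))
    have := Finset.card_le_card hsub
    rw [Nat.card_Icc] at this
    omega
  · intro hmem
    have hsub : Finset.Icc 1 L ⊆ S := by
      intro b hb
      simp only [Finset.mem_Icc] at hb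
      exact hdown L hmem b hb.1 hb.2
    have := Finset.card_le_card hsub
    rw [Nat.card_Icc] at this
    omega

/-- The `l`-partition built from `ψ`: fill chain `i` with the lengths of the
head-`i` segments, in weakly decreasing order. -/
def buildP (e : ℕ) (v : Fin l → ℤ) (ψ : Multisegment e) (c : Fin l) (j : ℕ) : ℕ :=
  ((Finset.Icc 1 (bound ψ)).filter fun L =>
    posRow e v c j < Ncount ψ (rres e v c j) L).card

lemma buildP_prefix (ψ : Multisegment e) (c : Fin l) (j : ℕ) (L : ℕ) (hL : 1 ≤ L) :
    L ≤ buildP e v ψ c j ↔ posRow e v c j < Ncount ψ (rres e v c j) L := by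
  unfold buildP
  set S := (Finset.Icc 1 (bound ψ)).filter fun L =>
    posRow e v c j < Ncount ψ (rres e v c j) L with hS
  have hdown : ∀ a ∈ S, ∀ b, 1 ≤ b → b ≤ a → b ∈ S := by
    intro a ha b hb1 hba
    simp only [hS, Finset.mem_filter, Finset.mem_Icc] at ha ⊢
    exact ⟨⟨hb1, le_trans hba ha.1.2⟩,
      lt_of_lt_of_le ha.2 (Ncount_antitone ψ _ hba)⟩
  rcases le_or_gt L (bound ψ) with hLB | hLB
  · rw [downset_card S (bound ψ) (Finset.filter_subset _ _) hdown L hL]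
    simp [hS, Finset.mem_filter, Finset.mem_Icc, hL, hLB]
  · constructor
    · intro hc
      exfalso
      have h1 : S.card ≤ (Finset.Icc 1 (bound ψ)).card :=
        Finset.card_le_card (Finset.filter_subset _ _)
      rw [Nat.card_Icc] at h1
      omega
    · intro hlt
      exfalso
      rw [Ncount_zero_of_big ψ _ L hLB] at hlt
      omega

lemma rres_succ_add_one (c : Fin l) (j : ℕ) :
    rres e v c (j + 1) + 1 = rres e v c j := by
  unfold rres
  push_cast
  ring

theorem buildP_works (he : 2 ≤ e) (hl : 0 < l) (hm : Monotone v)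
    (hs : ∀ c c' : Fin l, v c' - v c < (e : ℤ))
    (ψ : Multisegment e) (hψp : Proper ψ) (hψa : Aperiodic ψ)
    (hκ : ∀ (i : ZMod e) (L : ℕ), 1 ≤ L →
      Ncount ψ i L ≤ Ncount ψ (i + 1) L + kap e v i) :
    FLOTW e v (buildP e v ψ) ∧ fv e v (buildP e v ψ) = ψ := by
  set J : ℕ := e * (Multiset.card ψ + 1) with hJdef
  -- rows are weakly decreasing
  have hdec : ∀ (c : Fin l) (j : ℕ), buildP e v ψ c (j + 1) ≤ buildP e v ψ c j := by
    intro c j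
    rcases Nat.eq_zero_or_pos (buildP e v ψ c (j + 1)) with h0 | hp
    · omega
    · set L := buildP e v ψ c (j + 1) with hLdef
      have h1 : posRow e v c (j + 1) < Ncount ψ (rres e v c (j + 1)) L :=
        (buildP_prefix ψ c (j + 1) L hp).mp le_rfl
      have hP4 := posRow_succ_j he hm hs c j
      have hκ' := hκ (rres e v c (j + 1)) L hp
      rw [rres_succ_add_one] at hκ'
      have h2 : posRow e v c j < Ncount ψ (rres e v c j) L := by omega
      exact (buildP_prefix ψ c j L hp).mpr h2
  -- rows vanish beyond J
  have hbig : ∀ (c : Fin l) (j : ℕ), J ≤ j → buildP e v ψ c j = 0 := by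
    intro c j hj
    by_contra h0
    have hp : 1 ≤ buildP e v ψ c j := by omega
    have h1 := (buildP_prefix ψ c j 1 le_rfl).mp hp
    have h2 : Ncount ψ (rres e v c j) 1 ≤ Multiset.card ψ := Ncount_le_card ψ _ 1
    have h3 := row_lt_of_posRow (v := v) he c j
    have h5 : e * (posRow e v c j + 1) ≤ e * (Multiset.card ψ + 1) :=
      Nat.mul_le_mul_left e (by omega)
    omega
  refine ⟨⟨⟨hdec, fun c => ⟨J, fun j hj => hbig c j hj⟩⟩, ?_, ?_, ?_⟩, ?_⟩
  · -- FLOTW condition (1), middle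
    intro c h j
    set c1 : Fin l := ⟨c + 1, h⟩
    set c0 : Fin l := ⟨c, Nat.lt_of_succ_lt h⟩
    set j2 : ℕ := j + (v c1 - v c0).toNat with hj2
    rcases Nat.eq_zero_or_pos (buildP e v ψ c1 j2) with h0 | hp
    · omega
    · set L := buildP e v ψ c1 j2 with hLdef
      have h1 : posRow e v c1 j2 < Ncount ψ (rres e v c1 j2) L :=
        (buildP_prefix ψ c1 j2 L hp).mp le_rfl
      have hd0 : (0:ℤ) ≤ v c1 - v c0 := sub_nonneg.mpr (hm (by simp [c0, c1, Fin.le_def]))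
      have hres : rres e v c1 j2 = rres e v c0 j := by
        rw [rres_eq_iff]
        have hcast : ((j2 : ℕ) : ℤ) = (j : ℤ) + (v c1 - v c0) := by
          rw [hj2]
          push_cast
          rw [Int.toNat_of_nonneg hd0]
        rw [hcast]
        exact ⟨0, by ring⟩
      have hP2 := posRow_succ_c (e := e) (v := v) hm c h j
      rw [hres] at h1
      have h2 : posRow e v c0 j < Ncount ψ (rres e v c0 j) L := by
        have : posRow e v c1 j2 = posRow e v c0 j + 1 := hP2
        omega
      exact (buildP_prefix ψ c0 j L hp).mpr h2
  · -- FLOTW condition (1), wrap-around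
    intro hl' j
    set c0 : Fin l := ⟨0, hl'⟩
    set cL : Fin l := ⟨l - 1, Nat.sub_lt hl' Nat.one_pos⟩
    set j2 : ℕ := j + ((e : ℤ) + v c0 - v cL).toNat with hj2
    rcases Nat.eq_zero_or_pos (buildP e v ψ c0 j2) with h0 | hp
    · omega
    · set L := buildP e v ψ c0 j2 with hLdef
      have h1 : posRow e v c0 j2 < Ncount ψ (rres e v c0 j2) L :=
        (buildP_prefix ψ c0 j2 L hp).mp le_rfl
      have hE : (0:ℤ) ≤ (e : ℤ) + v c0 - v cL := by
        have := hs c0 cL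
        omega
      have hres : rres e v c0 j2 = rres e v cL j := by
        rw [rres_eq_iff]
        have hcast : ((j2 : ℕ) : ℤ) = (j : ℤ) + ((e : ℤ) + v c0 - v cL) := by
          rw [hj2]
          push_cast
          rw [Int.toNat_of_nonneg hE]
        rw [hcast]
        exact ⟨-1, by ring⟩
      have hP3 := posRow_wrap (e := e) (v := v) he hl' hm hs j
      rw [hres] at h1
      have h2 : posRow e v cL j < Ncount ψ (rres e v cL j) L := by
        have : posRow e v c0 j2 = posRow e v cL j + 1 := hP3
        omega
      exact (buildP_prefix ψ cL j L hp).mpr h2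
  · -- FLOTW condition (2)
    intro k hk
    obtain ⟨i, hi⟩ := hψa k hk
    refine ⟨i + (k : ZMod e) - 1, ?_⟩
    intro c j hcj heq
    have hres : rres e v c j = i := by
      have hrw : (((k:ℤ) - ((j:ℤ) + 1) + v c : ℤ) : ZMod e) =
          rres e v c j + ((k : ZMod e) - 1) := by
        unfold rres
        push_cast
        ring
      rw [hrw] at heq
      have heq' : rres e v c j + ((k : ZMod e) - 1) = i + ((k : ZMod e) - 1) := by
        rw [heq]; ring
      exact add_right_cancel heq'
    have h1 : posRow e v c j < Ncount ψ (rres e v c j) k :=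
      (buildP_prefix ψ c j k hk).mp (le_of_eq hcj.symm)
    have h2 : ¬ (k + 1 ≤ buildP e v ψ c j) := by omega
    have h3 : ¬ posRow e v c j < Ncount ψ (rres e v c j) (k + 1) :=
      fun hh => h2 ((buildP_prefix ψ c j (k + 1) (by omega)).mpr hh)
    have h4 := Ncount_succ ψ (rres e v c j) k hk
    rw [hres] at h1 h3 h4
    rw [hi] at h4
    omega
  · -- fv (buildP) = ψ
    have hsupp : ∀ c : Fin l,
        (Function.support fun j => if 0 < buildP e v ψ c j then
          ({(rres e v c j, buildP e v ψ c j)} : Multisegment e) else 0) ⊆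
          ↑(Finset.range J) := by
      intro c j hj
      simp only [Function.mem_support] at hj
      simp only [Finset.coe_range, Set.mem_Iio]
      by_contra hJj
      push_neg at hJj
      rw [hbig c j hJj] at hj
      simp at hj
    have hfv : fv e v (buildP e v ψ) =
        ∑ c : Fin l, ∑ j ∈ Finset.range J,
          (if 0 < buildP e v ψ c j then
            ({(rres e v c j, buildP e v ψ c j)} : Multisegment e) else 0) := by
      unfold fv rres
      rw [finsum_eq_sum_of_fintype]
      apply Finset.sum_congr rfl
      intro c _
      exact finsum_eq_sum_of_support_subset _ (hsupp c)
    rw [hfv]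
    ext q
    obtain ⟨i0, k⟩ := q
    rw [Multiset.count_sum']
    simp only [Multiset.count_sum']
    have hterm : ∀ (c : Fin l) (j : ℕ),
        Multiset.count (i0, k) (if 0 < buildP e v ψ c j then
          ({(rres e v c j, buildP e v ψ c j)} : Multisegment e) else 0) =
        if 0 < buildP e v ψ c j ∧ rres e v c j = i0 ∧ buildP e v ψ c j = k
          then 1 else 0 := by
      intro c j
      by_cases h0 : 0 < buildP e v ψ c j
      · rw [if_pos h0, Multiset.count_singleton]
        by_cases hq : rres e v c j = i0 ∧ buildP e v ψ c j = k
        · have h1 : ((i0, k) : ZMod e × ℕ) = (rres e v c j, buildP e v ψ c j) := by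
            rw [hq.1, hq.2]
          rw [if_pos h1, if_pos ⟨h0, hq⟩]
        · have h1 : ¬ ((i0, k) : ZMod e × ℕ) = (rres e v c j, buildP e v ψ c j) := by
            intro hh
            rw [Prod.mk.injEq] at hh
            exact hq ⟨hh.1.symm, hh.2.symm⟩
          rw [if_neg h1, if_neg (fun hh => hq hh.2)]
      · rw [if_neg h0, if_neg (fun hh => h0 hh.1)]
        simp
    simp only [hterm]
    rcases Nat.eq_zero_or_pos k with hk0 | hk
    · subst hk0
      have hz : ∀ (c : Fin l) (j : ℕ),
          (if 0 < buildP e v ψ c j ∧ rres e v c j = i0 ∧ buildP e v ψ c j = 0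
            then 1 else 0) = 0 := by
        intro c j
        rw [if_neg (fun hh => by omega)]
      simp only [hz, Finset.sum_const_zero]
      symm
      rw [Multiset.count_eq_zero]
      intro hmem
      have := hψp _ hmem
      simp at this
    · -- k ≥ 1
      have hcardA : ((Finset.univ ×ˢ Finset.range J).filter
          fun r : Fin l × ℕ => rres e v r.1 r.2 = i0 ∧
            posRow e v r.1 r.2 < Ncount ψ i0 k).card = Ncount ψ i0 k := by
        apply card_chain he hl hm hs
        have := Ncount_le_card ψ i0 k
        calc e * Ncount ψ i0 k ≤ e * (Multiset.card ψ + 1) :=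
          Nat.mul_le_mul_left e (by omega)
        _ = J := rfl
      have hcardB : ((Finset.univ ×ˢ Finset.range J).filter
          fun r : Fin l × ℕ => rres e v r.1 r.2 = i0 ∧
            posRow e v r.1 r.2 < Ncount ψ i0 (k + 1)).card = Ncount ψ i0 (k + 1) := by
        apply card_chain he hl hm hs
        have := Ncount_le_card ψ i0 (k + 1)
        calc e * Ncount ψ i0 (k + 1) ≤ e * (Multiset.card ψ + 1) :=
          Nat.mul_le_mul_left e (by omega)
        _ = J := rfl
      set A := (Finset.univ ×ˢ Finset.range J).filter
        fun r : Fin l × ℕ => rres e v r.1 r.2 = i0 ∧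
          posRow e v r.1 r.2 < Ncount ψ i0 k with hA
      set B := (Finset.univ ×ˢ Finset.range J).filter
        fun r : Fin l × ℕ => rres e v r.1 r.2 = i0 ∧
          posRow e v r.1 r.2 < Ncount ψ i0 (k + 1) with hB
      have hBA : B ⊆ A := by
        intro r hr
        simp only [hA, hB, Finset.mem_filter] at hr ⊢
        have := Ncount_antitone ψ i0 (by omega : k ≤ k + 1)
        exact ⟨hr.1, hr.2.1, by omega⟩
      have hCeq : ((Finset.univ ×ˢ Finset.range J).filter
          fun r : Fin l × ℕ => rres e v r.1 r.2 = i0 ∧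
            buildP e v ψ r.1 r.2 = k) = A \ B := by
        ext r
        simp only [hA, hB, Finset.mem_filter, Finset.mem_sdiff]
        constructor
        · rintro ⟨hbox, hres, hpk⟩
          have h1 : posRow e v r.1 r.2 < Ncount ψ (rres e v r.1 r.2) k :=
            (buildP_prefix ψ r.1 r.2 k hk).mp (le_of_eq hpk.symm)
          have h2 : ¬ posRow e v r.1 r.2 < Ncount ψ (rres e v r.1 r.2) (k + 1) :=
            fun hh => by
              have := (buildP_prefix ψ r.1 r.2 (k + 1) (by omega)).mpr hh
              omega
          rw [hres] at h1 h2
          exact ⟨⟨hbox, hres, h1⟩, fun hh => h2 hh.2.2⟩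
        · rintro ⟨⟨hbox, hres, h1⟩, h2⟩
          refine ⟨hbox, hres, ?_⟩
          have h3 : ¬ posRow e v r.1 r.2 < Ncount ψ i0 (k + 1) :=
            fun hh => h2 ⟨hbox, hres, hh⟩
          rw [← hres] at h1 h3
          have h4 : k ≤ buildP e v ψ r.1 r.2 :=
            (buildP_prefix ψ r.1 r.2 k hk).mpr h1
          have h5 : ¬ (k + 1 ≤ buildP e v ψ r.1 r.2) :=
            fun hh => h3 ((buildP_prefix ψ r.1 r.2 (k + 1) (by omega)).mp hh)
          omega
      have hsum : (∑ c : Fin l, ∑ j ∈ Finset.range J,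
          if 0 < buildP e v ψ c j ∧ rres e v c j = i0 ∧ buildP e v ψ c j = k
            then 1 else 0) =
          ((Finset.univ ×ˢ Finset.range J).filter
            fun r : Fin l × ℕ => rres e v r.1 r.2 = i0 ∧
              buildP e v ψ r.1 r.2 = k).card := by
        rw [Finset.card_filter, Finset.sum_product]
        apply Finset.sum_congr rfl
        intro c _
        apply Finset.sum_congr rfl
        intro j _
        congr 1
        simp only [eq_iff_iff]
        constructor
        · rintro ⟨_, h2, h3⟩; exact ⟨h2, h3⟩
        · rintro ⟨h2, h3⟩; exact ⟨by omega, h2, h3⟩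
      rw [hsum, hCeq, Finset.card_sdiff_of_subset hBA, hcardA, hcardB]
      have h6 := Ncount_succ ψ i0 k hk
      omega

end Construction
section Forward

variable {l : ℕ} {e : ℕ} {v : Fin l → ℤ}

lemma card_filter_multiset_sum {γ : Type*} (s : Finset γ)
    (f : γ → Multiset (ZMod e × ℕ)) (φ : ZMod e × ℕ → Prop) [DecidablePred φ] :
    Multiset.card ((∑ x ∈ s, f x).filter φ) =
      ∑ x ∈ s, Multiset.card ((f x).filter φ) := by
  classical
  induction s using Finset.induction_on with
  | empty => simp
  | insert _ _ h ih =>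
    rw [Finset.sum_insert h, Finset.sum_insert h, Multiset.filter_add,
      Multiset.card_add, ih]

theorem forward_dir (he : 2 ≤ e) (hl : 0 < l) (hm : Monotone v)
    (hs : ∀ c c' : Fin l, v c' - v c < (e : ℤ))
    (ψ : Multisegment e) (p : Fin l → ℕ → ℕ) (hF : FLOTW e v p)
    (hfv : fv e v p = ψ) (i : ZMod e) :
    rHat ψ i ≤ kap e v i := by
  obtain ⟨⟨hdec, hfin⟩, -, -, -⟩ := hF
  choose Bf hBf using hfin
  set J : ℕ := Finset.univ.sup Bf with hJ
  have hJ0 : ∀ (c : Fin l) (j : ℕ), J ≤ j → p c j = 0 := fun c j hj =>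
    hBf c j (le_trans (Finset.le_sup (Finset.mem_univ c)) hj)
  have hψ : ψ = ∑ c : Fin l, ∑ j ∈ Finset.range J,
      (if 0 < p c j then ({(rres e v c j, p c j)} : Multisegment e) else 0) := by
    rw [← hfv]
    unfold fv rres
    rw [finsum_eq_sum_of_fintype]
    apply Finset.sum_congr rfl
    intro c _
    apply finsum_eq_sum_of_support_subset
    intro j hj
    simp only [Function.mem_support] at hj
    simp only [Finset.coe_range, Set.mem_Iio]
    by_contra hJj
    push_neg at hJj
    rw [hJ0 c j hJj] at hj
    simp at hj
  have hNc : ∀ (i' : ZMod e) (L : ℕ), 1 ≤ L →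
      Ncount ψ i' L = ((Finset.univ ×ˢ Finset.range J).filter
        fun r : Fin l × ℕ => rres e v r.1 r.2 = i' ∧ L ≤ p r.1 r.2).card := by
    intro i' L hL
    unfold Ncount
    rw [hψ, card_filter_multiset_sum]
    rw [Finset.sum_congr rfl (fun c _ => card_filter_multiset_sum
      (Finset.range J) _ (fun q => q.1 = i' ∧ L ≤ q.2))]
    rw [Finset.card_filter, Finset.sum_product]
    apply Finset.sum_congr rfl
    intro c _
    apply Finset.sum_congr rfl
    intro j _
    by_cases h0 : 0 < p c j
    · rw [if_pos h0, Multiset.filter_singleton]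
      by_cases hq : rres e v c j = i' ∧ L ≤ p c j
      · rw [if_pos (show (rres e v c j, p c j).1 = i' ∧ L ≤ (rres e v c j, p c j).2
          from hq), if_pos hq]
        simp
      · rw [if_neg (show ¬ ((rres e v c j, p c j).1 = i' ∧ L ≤ (rres e v c j, p c j).2)
          from hq), if_neg hq]
        simp
    · rw [if_neg h0, if_neg (show ¬ (rres e v c j = i' ∧ L ≤ p c j) from
        fun hh => by omega)]
      simp
  have hIneq : ∀ L, 1 ≤ L → Ncount ψ i L ≤ Ncount ψ (i + 1) L + kap e v i := by
    intro L hL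
    rw [hNc i L hL, hNc (i + 1) L hL]
    set S := (Finset.univ ×ˢ Finset.range J).filter
      fun r : Fin l × ℕ => rres e v r.1 r.2 = i ∧ L ≤ p r.1 r.2 with hS
    set T := (Finset.univ ×ˢ Finset.range J).filter
      fun r : Fin l × ℕ => rres e v r.1 r.2 = i + 1 ∧ L ≤ p r.1 r.2 with hT
    have hsplit := Finset.card_filter_add_card_filter_not
      (s := S) (p := fun r : Fin l × ℕ => r.2 = 0)
    have hS0 : (S.filter fun r : Fin l × ℕ => r.2 = 0).card ≤ kap e v i := by
      apply Finset.card_le_card_of_injOn (fun r : Fin l × ℕ => r.1)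
      · intro r hr
        simp only [hS, Finset.mem_coe, Finset.mem_filter] at hr
        obtain ⟨⟨hbox, hres, hLp⟩, hj0⟩ := hr
        simp only [Finset.mem_coe, Finset.mem_filter, Finset.mem_univ, true_and]
        rw [hj0] at hres
        unfold rres at hres
        simpa using hres
      · intro a ha b hb hab
        simp only [Finset.coe_filter, Set.mem_setOf_eq] at ha hb
        exact Prod.ext hab (by omega)
    have hS1 : (S.filter fun r : Fin l × ℕ => ¬ r.2 = 0).card ≤ T.card := by
      apply Finset.card_le_card_of_injOn (fun r : Fin l × ℕ => (r.1, r.2 - 1))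
      · intro r hr
        simp only [hS, Finset.mem_coe, Finset.mem_filter, Finset.mem_product, Finset.mem_univ,
          true_and, Finset.mem_range] at hr
        obtain ⟨⟨hbox, hres, hLp⟩, hj0⟩ := hr
        simp only [hT, Finset.mem_coe, Finset.mem_filter, Finset.mem_product, Finset.mem_univ,
          true_and, Finset.mem_range]
        refine ⟨by omega, ?_, ?_⟩
        · have hh := rres_succ_add_one (e := e) (v := v) r.1 (r.2 - 1)
          rw [show r.2 - 1 + 1 = r.2 by omega] at hh
          rw [← hh, hres]
        · have hh := hdec r.1 (r.2 - 1)
          rw [show r.2 - 1 + 1 = r.2 by omega] at hh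
          omega
      · intro a ha b hb hab
        simp only [Finset.coe_filter, Set.mem_setOf_eq] at ha hb
        rw [Prod.mk.injEq] at hab
        exact Prod.ext hab.1 (by omega)
    omega
  exact (rHat_le_iff ψ i (kap e v i)).mpr hIneq

end Forward
/-- An aperiodic multisegment `ψ` lies in the image of `f_v` iff
`κ_i(v) ≥ r̂_i(ψ)` for every `i ∈ ℤ/eℤ`, where `κ_i(v)` is the number of
coordinates of `v` congruent to `i` mod `e`. -/
theorem admissible_multicharge_iff (e : ℕ) (he : 2 ≤ e) {l : ℕ} (hl : 0 < l)
    (v : Fin l → ℤ) (hv : IsMulticharge e v)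
    (ψ : Multisegment e) (hψp : Proper ψ) (hψa : Aperiodic ψ) :
    (∃ p : Fin l → ℕ → ℕ, FLOTW e v p ∧ fv e v p = ψ) ↔
      ∀ i : ZMod e,
        rHat ψ i ≤ (Finset.univ.filter fun c : Fin l => ((v c : ZMod e) = i)).card := by
  obtain ⟨hm, hs⟩ := hv
  constructor
  · rintro ⟨p, hF, hfv⟩ i
    exact forward_dir he hl hm hs ψ p hF hfv i
  · intro hκ
    have hκ' : ∀ (i : ZMod e) (L : ℕ), 1 ≤ L →
        Ncount ψ i L ≤ Ncount ψ (i + 1) L + kap e v i :=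
      fun i => (rHat_le_iff ψ i (kap e v i)).mp (hκ i)
    obtain ⟨h1, h2⟩ := buildP_works he hl hm hs ψ hψp hψa hκ'
    exact ⟨buildP e v ψ, h1, h2⟩

end AffineA
end
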